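/- arXiv:1406.3008 — 8 statements merged into one kernel-verified Lean document; each statement's English description precedes it below -/
import Mathlib

section
/- The Jacobi triple product identity: for |q|<1 and y nonzero, the infinite product ∏_{k≥1} (1-q^{2k})(1+q^{2k-1}y^2)(1+q^{2k-1}y^{-2}) equals the sum ∑_{k∈ℤ} q^{k^2} y^{2k}. -/
/- Auxiliary development for the Jacobi triple product. -/
namespace JTP
noncomputable section
open Complex Finset Filter Topology

lemma tri (k : ℕ) : (k+1)*k/2 = k*(k-1)/2 + k := by
  match k with
  | 0 => rfl
  | m+1 =>
    rw [show (m+1+1)*(m+1) = (m+1)*m + (m+1)*2 by ring,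
      Nat.add_mul_div_right _ _ (by norm_num), Nat.add_sub_cancel]

/-- Gaussian binomial style coefficients (including the `Q^(k(k-1)/2)` factor). -/
def gb (Q : ℂ) : ℕ → ℕ → ℂ
  | 0, 0 => 1
  | 0, _+1 => 0
  | n+1, 0 => gb Q n 0
  | n+1, k+1 => gb Q n (k+1) + Q^n * gb Q n k

lemma gb_zero (Q : ℂ) (n : ℕ) : gb Q n 0 = 1 := by
  induction n with
  | zero => rfl
  | succ n ih => rw [gb, ih]

lemma gb_of_lt (Q : ℂ) : ∀ {n k : ℕ}, n < k → gb Q n k = 0 := by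
  intro n
  induction n with
  | zero => intro k hk; match k, hk with
            | k+1, _ => rfl
  | succ n ih =>
    intro k hk
    match k, hk with
    | k+1, hk =>
      rw [gb, ih (by omega), ih (by omega), mul_zero, add_zero]

lemma gb_diag (Q : ℂ) (n : ℕ) : gb Q n n = Q ^ (n*(n-1)/2) := by
  induction n with
  | zero => rfl
  | succ n ih =>
    rw [gb, gb_of_lt Q (by omega), ih, zero_add, ← pow_add]
    congr 1
    simp only [Nat.add_sub_cancel]
    rw [tri, Nat.add_comm]

/-- Homogeneous q-binomial theorem. -/
lemma homog (Q a b : ℂ) (n : ℕ) :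
    ∏ t ∈ range n, (a + b * Q ^ t) = ∑ k ∈ range (n+1), gb Q n k * a^(n-k) * b^k := by
  induction n with
  | zero => simp [gb]
  | succ n ih =>
    rw [prod_range_succ, ih, mul_add, sum_mul, sum_mul]
    have hSa : (∑ k ∈ range (n+1), gb Q n k * a^(n-k) * b^k * a)
        = ∑ k ∈ range (n+2), gb Q n k * a^(n+1-k) * b^k := by
      conv_rhs => rw [Finset.sum_range_succ]
      rw [gb_of_lt Q (by omega), zero_mul, zero_mul, add_zero]
      refine Finset.sum_congr rfl fun k hk => ?_
      rw [mem_range] at hk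
      have : a ^ (n+1-k) = a ^ (n-k) * a := by rw [← pow_succ]; congr 1; omega
      rw [this]; ring
    have hSb : (∑ k ∈ range (n+1), gb Q n k * a^(n-k) * b^k * (b * Q^n))
        = ∑ k ∈ range (n+2), (Q^n * (if k = 0 then 0 else gb Q n (k-1))) * a^(n+1-k) * b^k := by
      conv_rhs => rw [Finset.sum_range_succ' (fun k => (Q^n * (if k = 0 then 0 else gb Q n (k-1))) * a^(n+1-k) * b^k) (n+1)]
      simp only [Nat.succ_ne_zero, if_false, if_true, reduceIte, Nat.add_sub_cancel,
        mul_zero, zero_mul, add_zero]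
      refine Finset.sum_congr rfl fun k hk => ?_
      have : n + 1 - (k+1) = n - k := by omega
      rw [this, pow_succ]; ring
    rw [hSa, hSb, ← Finset.sum_add_distrib]
    refine Finset.sum_congr rfl fun k hk => ?_
    match k with
    | 0 => simp [gb_zero]
    | k+1 => rw [if_neg (Nat.succ_ne_zero _), Nat.add_sub_cancel, gb]; ring

/-- Partial products of the Euler function. -/
def P (Q : ℂ) (m : ℕ) : ℂ := ∏ j ∈ range m, (1 - Q ^ (j+1))

lemma P_succ (Q : ℂ) (m : ℕ) : P Q (m+1) = P Q m * (1 - Q ^ (m+1)) := by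
  rw [P, prod_range_succ]; rfl

lemma gb_mul_P (Q : ℂ) : ∀ n k : ℕ, k ≤ n →
    gb Q n k * (P Q k * P Q (n-k)) = Q^(k*(k-1)/2) * P Q n := by
  intro n
  induction n with
  | zero =>
    intro k hk
    interval_cases k
    simp [gb, P]
  | succ n ih =>
    intro k hk
    match k with
    | 0 => simp [gb_zero, P]
    | k+1 =>
      rcases Nat.lt_or_ge (k+1) (n+1) with h | h
      · -- k + 1 ≤ n
        have hk1 : k + 1 ≤ n := by omega
        have ihA := ih (k+1) hk1
        have ihB := ih k (by omega)
        rw [P_succ] at ihA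
        simp only [Nat.add_sub_cancel] at ihA
        rw [tri, pow_add] at ihA
        have e3 : n - k = (n - (k+1)) + 1 := by omega
        rw [e3, P_succ] at ihB
        have e1 : n + 1 - (k+1) = (n - (k+1)) + 1 := by omega
        rw [gb, e1, P_succ, P_succ, P_succ]
        simp only [Nat.add_sub_cancel]
        rw [tri, pow_add]
        have hq2 : Q ^ n = Q ^ (n - (k+1) + 1) * Q ^ k := by
          rw [← pow_add]; congr 1; omega
        have hq1 : Q ^ (n+1) = Q ^ (n - (k+1) + 1) * Q ^ (k+1) := by
          rw [← pow_add]; congr 1; omega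
        rw [hq2, hq1]
        linear_combination (1 - Q ^ (n - (k+1) + 1)) * ihA
          + Q ^ (n - (k+1) + 1) * Q ^ k * (1 - Q^(k+1)) * ihB
      · -- k + 1 = n + 1, diagonal
        have : k = n := by omega
        subst this
        rw [gb_diag, Nat.sub_self]
        simp [P]

lemma hasProd_zero_of_eq_zero {f : ℕ → ℂ} {j : ℕ} (hj : f j = 0) : HasProd f 0 := by
  have hev : ∀ᶠ s : Finset ℕ in atTop, ∏ i ∈ s, f i = 0 := by
    filter_upwards [eventually_ge_atTop ({j} : Finset ℕ)] with s hs
    exact Finset.prod_eq_zero (hs (Finset.mem_singleton_self j)) hj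
  exact (tendsto_congr' (hev.mono fun s h => h.symm)).mp tendsto_const_nhds

lemma summable_log_one_add {z : ℕ → ℂ} (hz : Summable fun n => ‖z n‖) :
    Summable fun n => Complex.log (1 + z n) := by
  obtain ⟨N, hN⟩ := eventually_atTop.mp
    (hz.tendsto_atTop_zero.eventually_le_const (by norm_num : (0:ℝ) < 1/2))
  rw [← summable_nat_add_iff N]
  refine Summable.of_norm_bounded (g := fun n => 3/2 * ‖z (n + N)‖)
    (((summable_nat_add_iff N).mpr hz).mul_left _) fun n => ?_
  exact Complex.norm_log_one_add_half_le_self (hN (n + N) le_add_self)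

lemma hasProd_one_add_of_ne_zero {z : ℕ → ℂ} (hz : Summable fun n => ‖z n‖)
    (h0 : ∀ n, 1 + z n ≠ 0) :
    HasProd (fun n => 1 + z n) (Complex.exp (∑' n, Complex.log (1 + z n))) := by
  have h := (summable_log_one_add hz).hasSum.cexp
  exact (funext fun n => Complex.exp_log (h0 n) :
    (Complex.exp ∘ fun n => Complex.log (1 + z n)) = fun n => 1 + z n) ▸ h

lemma multipliable_one_add {z : ℕ → ℂ} (hz : Summable fun n => ‖z n‖) :
    Multipliable fun n => 1 + z n := by
  by_cases h0 : ∀ n, 1 + z n ≠ 0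
  · exact (hasProd_one_add_of_ne_zero hz h0).multipliable
  · push_neg at h0
    obtain ⟨j, hj⟩ := h0
    exact ⟨0, hasProd_zero_of_eq_zero hj⟩

lemma tprod_one_add_ne_zero {z : ℕ → ℂ} (hz : Summable fun n => ‖z n‖)
    (h0 : ∀ n, 1 + z n ≠ 0) : (∏' n, (1 + z n)) ≠ 0 := by
  rw [(hasProd_one_add_of_ne_zero hz h0).tprod_eq]
  exact Complex.exp_ne_zero _

lemma exists_bounds {f : ℕ → ℂ} {L : ℂ}
    (h : Tendsto (fun m => ∏ j ∈ range m, f j) atTop (𝓝 L)) (hL : L ≠ 0)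
    (h0 : ∀ j, f j ≠ 0) :
    ∃ c C : ℝ, 0 < c ∧ (∀ m, c ≤ ‖∏ j ∈ range m, f j‖) ∧ ∀ m, ‖∏ j ∈ range m, f j‖ ≤ C := by
  set g : ℕ → ℝ := fun m => ‖∏ j ∈ range m, f j‖ with hg
  have hgt : Tendsto g atTop (𝓝 ‖L‖) := h.norm
  obtain ⟨C, hC⟩ := hgt.bddAbove_range
  obtain ⟨N, hN⟩ := eventually_atTop.mp
    (hgt.eventually_const_le (half_lt_self (norm_pos_iff.mpr hL)))
  have hpos : ∀ m, 0 < g m := fun m =>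
    norm_pos_iff.mpr (Finset.prod_ne_zero_iff.mpr fun j _ => h0 j)
  have hne : (((range (N+1)).image g)).Nonempty :=
    (Finset.nonempty_range_iff.mpr (Nat.succ_ne_zero N)).image g
  refine ⟨min (‖L‖/2) (((range (N+1)).image g).min' hne), C, ?_, fun m => ?_, fun m => hC ⟨m, rfl⟩⟩
  · refine lt_min (half_pos (norm_pos_iff.mpr hL)) ?_
    rw [Finset.lt_min'_iff]
    intro a ha
    obtain ⟨m, -, rfl⟩ := Finset.mem_image.mp ha
    exact hpos m
  · rcases le_or_gt m N with hm | hm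
    · exact le_trans (min_le_right _ _)
        (Finset.min'_le _ _ (Finset.mem_image_of_mem g (Finset.mem_range.mpr (by omega))))
    · exact le_trans (min_le_left _ _) (hN m (by omega))

lemma summable_pow_sq_mul {x v : ℂ} (hx : ‖x‖ < 1) (hx0 : x ≠ 0) (hv : v ≠ 0) :
    Summable (fun n : ℕ => x ^ (n^2) * v ^ n) := by
  have hxn : (0:ℝ) < ‖x‖ := norm_pos_iff.mpr hx0
  have hvn : (0:ℝ) < ‖v‖ := norm_pos_iff.mpr hv
  apply summable_of_ratio_test_tendsto_lt_one (l := 0) one_pos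
  · exact Eventually.of_forall fun n => mul_ne_zero (pow_ne_zero _ hx0) (pow_ne_zero _ hv)
  · have key : ∀ n : ℕ, ‖x ^ ((n+1)^2) * v ^ (n+1)‖ / ‖x ^ (n^2) * v ^ n‖
        = (‖x‖^2)^n * (‖x‖ * ‖v‖) := by
      intro n
      rw [norm_mul, norm_mul, norm_pow, norm_pow, norm_pow, norm_pow,
        div_eq_iff (mul_ne_zero (pow_ne_zero _ hxn.ne') (pow_ne_zero _ hvn.ne'))]
      ring
    have hlim : Tendsto (fun n : ℕ => (‖x‖^2)^n * (‖x‖ * ‖v‖)) atTop (𝓝 0) := by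
      have h2 : ‖x‖^2 < 1 := by nlinarith [norm_nonneg x]
      simpa using (tendsto_pow_atTop_nhds_zero_of_lt_one (by positivity) h2).mul_const (‖x‖ * ‖v‖)
    exact Tendsto.congr (fun n => (key n).symm) hlim
def F (q w : ℂ) (n : ℕ) : ℂ :=
  ∏ j ∈ range n, ((1 + q^(2*j+1) * w) * (1 + q^(2*j+1) * w⁻¹))

def u (q w : ℂ) (n : ℕ) (m : ℤ) : ℂ :=
  if m.natAbs ≤ n then
    q ^ (m^2) * w ^ m * P (q^2) (2*n) * (P (q^2) (((n:ℤ) + m).toNat))⁻¹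
      * (P (q^2) (((n:ℤ) - m).toNat))⁻¹
  else 0

lemma heven (k : ℕ) : 2 * (k*(k-1)/2) = k*(k-1) := by
  match k with
  | 0 => rfl
  | t+1 =>
    simp only [Nat.add_sub_cancel]
    rw [mul_comm (t+1) t]
    exact Nat.mul_div_cancel' (even_iff_two_dvd.mp (Nat.even_mul_succ_self t))

lemma zpow_eq_div_pow (x : ℂ) (hx : x ≠ 0) (m : ℤ) (a b : ℕ) (h : m + (b:ℤ) = a) :
    x ^ m = x ^ a * (x ^ b)⁻¹ := by
  have hm : m = (a:ℤ) - b := by omega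
  rw [hm, zpow_sub₀ hx, zpow_natCast, zpow_natCast, div_eq_mul_inv]

lemma term_eq (q w : ℂ) (hq0 : q ≠ 0) (hw : w ≠ 0) (N k j e : ℕ)
    (hkj : k + j = 2*(N+1)) (he : 2*e = k*(k-1))
    (X Y Z gbv : ℂ) (hX : X ≠ 0) (hY : Y ≠ 0)
    (hgb : gbv * (X * Y) = (q^2)^e * Z) :
    q ^ (((k:ℤ) - (N+1))^2) * w ^ ((k:ℤ) - (N+1)) * Z * X⁻¹ * Y⁻¹
      = gbv * (q^(2*N+1))^j * w^k * ((q^((N+1)*(3*N+1)))⁻¹ * (w^(N+1))⁻¹) := by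
  have he'' : (2*e : ℤ) = (k:ℤ)^2 - k := by
    match k with
    | 0 => simp at he; simp [he]
    | t+1 =>
      simp only [Nat.add_sub_cancel] at he
      have h2 : (2*e : ℤ) = ((t+1)*t : ℕ) := by exact_mod_cast he
      push_cast at h2 ⊢
      linear_combination h2
  have hkj' : (k:ℤ) + j = 2*((N:ℤ)+1) := by exact_mod_cast hkj
  have hqpart : q ^ (((k:ℤ) - (N+1))^2)
      = q ^ (2*e + (2*N+1)*j) * (q ^ ((N+1)*(3*N+1)))⁻¹ := by
    refine zpow_eq_div_pow q hq0 _ _ _ ?_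
    push_cast
    linear_combination -he'' - (2*(N:ℤ)+1) * hkj'
  have hwpart : w ^ ((k:ℤ) - (N+1)) = w ^ k * (w ^ (N+1))⁻¹ := by
    refine zpow_eq_div_pow w hw _ _ _ ?_
    push_cast
    ring
  have hgb' : gbv = (q^2)^e * Z * X⁻¹ * Y⁻¹ := by
    field_simp at hgb ⊢
    linear_combination hgb
  rw [hqpart, hwpart, hgb']
  rw [pow_add, ← pow_mul, ← pow_mul]
  ring

-- appended into s3 before `end`
lemma split_prod (q w : ℂ) (N : ℕ) :
    ∏ t ∈ range (2*(N+1)), (q^(2*N+1) + w * (q^2)^t)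
      = q^((N+1)*(3*N+1)) * (∏ j ∈ range (N+1), (1 + q^(2*j+1) * w))
        * ∏ j ∈ range (N+1), (w + q^(2*j+1)) := by
  rw [show 2*(N+1) = (N+1) + (N+1) by ring, Finset.prod_range_add]
  have hpart2 : ∏ t ∈ range (N+1), (q^(2*N+1) + w * (q^2)^((N+1) + t))
      = (q^(2*N+1))^(N+1) * ∏ t ∈ range (N+1), (1 + q^(2*t+1) * w) := by
    have step : ∀ t ∈ range (N+1), (q^(2*N+1) + w * (q^2)^((N+1) + t))
        = q^(2*N+1) * (1 + q^(2*t+1) * w) := by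
      intro t _
      have : ((q^2)^((N+1) + t) : ℂ) = q^(2*N+1) * q^(2*t+1) := by
        rw [← pow_mul, ← pow_add]; congr 1; ring
      rw [this]; ring
    rw [Finset.prod_congr rfl step, Finset.prod_mul_distrib, Finset.prod_const,
      Finset.card_range]
  have hpart1 : ∏ t ∈ range (N+1), (q^(2*N+1) + w * (q^2)^t)
      = q^(N*(N+1)) * ∏ j ∈ range (N+1), (w + q^(2*j+1)) := by
    rw [← Finset.prod_range_reflect]
    have step : ∀ j ∈ range (N+1), (q^(2*N+1) + w * (q^2)^(N+1-1-j))
        = q^(2*(N-j)) * (w + q^(2*j+1)) := by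
      intro j hj
      rw [mem_range] at hj
      have e1 : N+1-1-j = N - j := by omega
      have e2 : ((q^2)^(N-j) : ℂ) = q^(2*(N-j)) := by rw [← pow_mul]
      have e3 : (q^(2*(N-j)) * q^(2*j+1) : ℂ) = q^(2*N+1) := by
        rw [← pow_add]; congr 1; omega
      rw [e1, e2, ← e3]; ring
    have hsum : ∑ j ∈ range (N+1), 2*(N-j) = N*(N+1) := by
      have g1 : ∑ j ∈ range (N+1), 2*(N-j) = ∑ j ∈ range (N+1), 2*j := by
        rw [← Finset.sum_range_reflect (fun j => 2*j) (N+1)]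
        refine Finset.sum_congr rfl fun j hj => ?_
        rw [mem_range] at hj
        omega
      have g2' : (∑ j ∈ range (N+1), j) * 2 = N*(N+1) := by
        rw [Finset.sum_range_id_mul_two (N+1), Nat.add_sub_cancel, Nat.mul_comm]
      rw [g1, ← Finset.mul_sum, mul_comm 2, g2']
    rw [Finset.prod_congr rfl step, Finset.prod_mul_distrib,
      Finset.prod_pow_eq_pow_sum, hsum]
  rw [hpart1, hpart2]
  ring

lemma P_ne_zero {Q : ℂ} (hQ : ‖Q‖ < 1) (m : ℕ) : P Q m ≠ 0 := by
  rw [P]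
  refine Finset.prod_ne_zero_iff.mpr fun j _ => ?_
  intro h
  have h1 : (1:ℂ) = Q^(j+1) := by linear_combination h
  have h2 : ‖(Q:ℂ)^(j+1)‖ < 1 := by
    rw [norm_pow]
    exact pow_lt_one₀ (norm_nonneg _) hQ (Nat.succ_ne_zero j)
  rw [← h1] at h2
  simp at h2

lemma wprod (q w : ℂ) (hw : w ≠ 0) (N : ℕ) :
    ∏ j ∈ range (N+1), (w + q^(2*j+1))
      = w^(N+1) * ∏ j ∈ range (N+1), (1 + q^(2*j+1) * w⁻¹) := by
  have step : ∀ j ∈ range (N+1), (w + q^(2*j+1)) = w * (1 + q^(2*j+1) * w⁻¹) := by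
    intro j _
    field_simp
  rw [Finset.prod_congr rfl step, Finset.prod_mul_distrib, Finset.prod_const,
    Finset.card_range]

lemma tsum_u_eq (q w : ℂ) (hq : ‖q‖ < 1) (hq0 : q ≠ 0) (hw : w ≠ 0) (N : ℕ) :
    ∑' m : ℤ, u q w (N+1) m = F q w (N+1) := by
  have hQ : ‖q^2‖ < 1 := by rw [norm_pow]; nlinarith [norm_nonneg q]
  have hPne : ∀ m, P (q^2) m ≠ 0 := P_ne_zero hQ
  have h1 : ∑' m : ℤ, u q w (N+1) m
      = ∑ k ∈ range (2*(N+1)+1), u q w (N+1) ((k:ℤ) - (N+1)) := by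
    rw [tsum_eq_sum (s := (range (2*(N+1)+1)).image (fun k : ℕ => (k:ℤ) - (N+1)))]
    · exact Finset.sum_image (fun a _ b _ h => by omega)
    · intro m hm
      rw [u, if_neg]
      intro habs
      exact hm (Finset.mem_image.mpr ⟨(m + (N+1)).toNat, Finset.mem_range.mpr (by omega),
        by omega⟩)
  have h2 : ∀ k ∈ range (2*(N+1)+1), u q w (N+1) ((k:ℤ) - (N+1))
      = gb (q^2) (2*(N+1)) k * (q^(2*N+1))^(2*(N+1)-k) * w^k
        * ((q^((N+1)*(3*N+1)))⁻¹ * (w^(N+1))⁻¹) := by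
    intro k hk
    rw [mem_range] at hk
    rw [u, if_pos (by omega)]
    have e1 : (((N+1:ℕ):ℤ) + ((k:ℤ) - ((N:ℤ)+1))).toNat = k := by omega
    have e2 : (((N+1:ℕ):ℤ) - ((k:ℤ) - ((N:ℤ)+1))).toNat = 2*(N+1) - k := by omega
    rw [e1, e2]
    exact term_eq q w hq0 hw N k (2*(N+1)-k) (k*(k-1)/2) (by omega) (heven k)
      _ _ _ _ (hPne k) (hPne (2*(N+1)-k)) (gb_mul_P (q^2) (2*(N+1)) k (by omega))
  rw [h1, Finset.sum_congr rfl h2, ← Finset.sum_mul,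
    ← homog (q^2) (q^(2*N+1)) w (2*(N+1)), split_prod q w N, wprod q w hw N]
  rw [F, Finset.prod_mul_distrib]
  have hc : (q^((N+1)*(3*N+1)) : ℂ) ≠ 0 := pow_ne_zero _ hq0
  have hwp : (w^(N+1) : ℂ) ≠ 0 := pow_ne_zero _ hw
  field_simp
  ring

section analytic
variable {q w : ℂ}

lemma normQ_lt (hq : ‖q‖ < 1) : ‖q^2‖ < 1 := by
  rw [norm_pow]; nlinarith [norm_nonneg q]

lemma sumA (hq : ‖q‖ < 1) : Summable (fun k : ℕ => ‖(-((q^2)^(k+1)) : ℂ)‖) := by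
  have h := (summable_nat_add_iff (f := fun n : ℕ => ‖q^2‖^n) 1).mpr
    (summable_geometric_of_lt_one (norm_nonneg _) (normQ_lt hq))
  refine h.congr fun k => ?_
  simp

lemma fA_eq : (fun k : ℕ => 1 - (q^2)^(k+1)) = (fun k : ℕ => 1 + -((q^2)^(k+1))) := by
  funext k; ring

lemma fA_ne_zero (hq : ‖q‖ < 1) (k : ℕ) : (1 : ℂ) - (q^2)^(k+1) ≠ 0 := by
  intro h
  have h1 : (1:ℂ) = (q^2)^(k+1) := by linear_combination h
  have h2 : ‖((q^2):ℂ)^(k+1)‖ < 1 := by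
    rw [norm_pow]
    exact pow_lt_one₀ (norm_nonneg _) (normQ_lt hq) (Nat.succ_ne_zero k)
  rw [← h1] at h2
  simp at h2

lemma multA (hq : ‖q‖ < 1) : Multipliable (fun k : ℕ => 1 - (q^2)^(k+1)) := by
  rw [fA_eq]
  exact multipliable_one_add (sumA hq)

lemma A_ne_zero (hq : ‖q‖ < 1) : (∏' k : ℕ, (1 - (q^2)^(k+1))) ≠ 0 := by
  rw [fA_eq]
  refine tprod_one_add_ne_zero (sumA hq) fun k => ?_
  have := fA_ne_zero hq k
  rwa [sub_eq_add_neg] at this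

lemma tendsto_P (hq : ‖q‖ < 1) :
    Tendsto (fun m => P (q^2) m) atTop (𝓝 (∏' k : ℕ, (1 - (q^2)^(k+1)))) := by
  have := (multA (q := q) hq).hasProd.tendsto_prod_nat
  simpa only [P] using this

lemma sumG (hq : ‖q‖ < 1) (hq0 : q ≠ 0) (hw : w ≠ 0) :
    Summable (fun j : ℕ =>
      ‖q^(2*j+1) * w + q^(2*j+1) * w⁻¹ + q^(2*j+1) * w * (q^(2*j+1) * w⁻¹)‖) := by
  have hgeo : Summable (fun j : ℕ => (‖q‖^2)^j) :=
    summable_geometric_of_lt_one (by positivity) (by nlinarith [norm_nonneg q])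
  have ha : Summable (fun j : ℕ => ‖q^(2*j+1) * w‖) := by
    refine (hgeo.mul_right (‖q‖ * ‖w‖)).congr fun j => ?_
    rw [norm_mul, norm_pow, ← pow_mul, ← mul_assoc, ← pow_succ]
  have hb : Summable (fun j : ℕ => ‖q^(2*j+1) * w⁻¹‖) := by
    refine (hgeo.mul_right (‖q‖ * ‖w⁻¹‖)).congr fun j => ?_
    rw [norm_mul, norm_pow, ← pow_mul, ← mul_assoc, ← pow_succ]
  have hab : Summable (fun j : ℕ => ‖q^(2*j+1) * w * (q^(2*j+1) * w⁻¹)‖) := by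
    refine Summable.of_nonneg_of_le (fun j => norm_nonneg _) (fun j => ?_) hgeo
    have : (q^(2*j+1) * w * (q^(2*j+1) * w⁻¹) : ℂ) = q^((2*j+1)+(2*j+1)) := by
      rw [pow_add]
      have hww : w * w⁻¹ = 1 := mul_inv_cancel₀ hw
      linear_combination (q^(2*j+1) * q^(2*j+1)) * hww
    rw [this, norm_pow]
    calc ‖q‖^((2*j+1)+(2*j+1)) = (‖q‖^2)^(2*j+1) := by
          rw [← pow_mul]; congr 1; ring
      _ ≤ (‖q‖^2)^j := by
          refine pow_le_pow_of_le_one (by positivity) ?_ (by omega)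
          nlinarith [norm_nonneg q]
  refine Summable.of_nonneg_of_le (fun j => norm_nonneg _) (fun j => ?_) ((ha.add hb).add hab)
  exact (norm_add_le _ _).trans (add_le_add (norm_add_le _ _) le_rfl)

lemma multG (hq : ‖q‖ < 1) (hq0 : q ≠ 0) (hw : w ≠ 0) :
    Multipliable (fun j : ℕ => (1 + q^(2*j+1) * w) * (1 + q^(2*j+1) * w⁻¹)) := by
  refine (multipliable_one_add (sumG hq hq0 hw)).congr fun j => ?_
  ring

lemma tendsto_F (hq : ‖q‖ < 1) (hq0 : q ≠ 0) (hw : w ≠ 0) :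
    Tendsto (F q w) atTop
      (𝓝 (∏' j : ℕ, ((1 + q^(2*j+1) * w) * (1 + q^(2*j+1) * w⁻¹)))) := by
  have := (multG hq hq0 hw).hasProd.tendsto_prod_nat
  exact this

lemma sum_base (hq : ‖q‖ < 1) (hq0 : q ≠ 0) (hw : w ≠ 0) :
    Summable (fun m : ℤ => ‖q^(m^2)‖ * ‖w^m‖) := by
  have h : Summable (fun m : ℤ => ‖q^(m^2) * w^m‖) := by
    rw [summable_int_iff_summable_nat_and_neg]
    constructor
    · refine (summable_norm_iff.mpr (summable_pow_sq_mul hq hq0 hw)).congr fun n => ?_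
      rw [show ((n:ℤ)^2) = ((n^2 : ℕ) : ℤ) by push_cast; ring, zpow_natCast, zpow_natCast]
    · refine (summable_norm_iff.mpr
        (summable_pow_sq_mul hq hq0 (inv_ne_zero hw))).congr fun n => ?_
      rw [show ((-(n:ℤ))^2) = ((n^2 : ℕ) : ℤ) by push_cast; ring, zpow_natCast,
        zpow_neg, zpow_natCast, ← inv_pow]
  exact h.congr fun m => norm_mul _ _

end analytic

section core
variable {q w : ℂ}

lemma u_tendsto (hq : ‖q‖ < 1) (hq0 : q ≠ 0) (hw : w ≠ 0) (m : ℤ) :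
    Tendsto (fun n => u q w n m) atTop
      (𝓝 (q^(m^2) * w^m * (∏' k : ℕ, (1 - (q^2)^(k+1)))⁻¹)) := by
  set A := ∏' k : ℕ, (1 - (q^2)^(k+1)) with hA
  have hAne : A ≠ 0 := A_ne_zero hq
  have hP := tendsto_P (q := q) hq
  have h2n : Tendsto (fun n : ℕ => P (q^2) (2*n)) atTop (𝓝 A) :=
    hP.comp (tendsto_atTop_atTop.mpr fun b => ⟨b, fun a ha => by omega⟩)
  have hplus : Tendsto (fun n : ℕ => P (q^2) (((n:ℤ) + m).toNat)) atTop (𝓝 A) :=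
    hP.comp (tendsto_atTop_atTop.mpr fun b => ⟨b + m.natAbs, fun a ha => by omega⟩)
  have hminus : Tendsto (fun n : ℕ => P (q^2) (((n:ℤ) - m).toNat)) atTop (𝓝 A) :=
    hP.comp (tendsto_atTop_atTop.mpr fun b => ⟨b + m.natAbs, fun a ha => by omega⟩)
  have hmain : Tendsto (fun n : ℕ => q^(m^2) * w^m * P (q^2) (2*n)
      * (P (q^2) (((n:ℤ) + m).toNat))⁻¹ * (P (q^2) (((n:ℤ) - m).toNat))⁻¹) atTop
      (𝓝 (q^(m^2) * w^m * A * A⁻¹ * A⁻¹)) :=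
    ((((tendsto_const_nhds (x := q^(m^2) * w^m)).mul h2n).mul
      (hplus.inv₀ hAne)).mul (hminus.inv₀ hAne))
  rw [show q^(m^2) * w^m * A * A⁻¹ * A⁻¹ = q^(m^2) * w^m * A⁻¹ by
    rw [mul_inv_cancel_right₀ hAne]] at hmain
  refine hmain.congr' ?_
  filter_upwards [eventually_ge_atTop m.natAbs] with n hn
  rw [u, if_pos hn]

lemma main_core (hq : ‖q‖ < 1) (hq0 : q ≠ 0) (hw : w ≠ 0) :
    (∏' k : ℕ, (1 - (q^2)^(k+1)))
      * ∏' j : ℕ, ((1 + q^(2*j+1) * w) * (1 + q^(2*j+1) * w⁻¹))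
      = ∑' m : ℤ, q ^ (m^2) * w ^ m := by
  set A := ∏' k : ℕ, (1 - (q^2)^(k+1)) with hA
  have hAne : A ≠ 0 := A_ne_zero hq
  obtain ⟨c, C, hc, hcle, hCle⟩ := exists_bounds (L := A)
    (by simpa only [P] using tendsto_P (q := q) hq) hAne (fA_ne_zero hq)
  have hcle' : ∀ mm, c ≤ ‖P (q^2) mm‖ := by simpa only [P] using hcle
  have hCle' : ∀ mm, ‖P (q^2) mm‖ ≤ C := by simpa only [P] using hCle
  have hC0 : (0:ℝ) ≤ C := le_trans (by simp [P]) (hCle' 0)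
  -- domination
  have hbound : ∀ (n : ℕ) (m : ℤ), ‖u q w n m‖ ≤ ‖q^(m^2)‖ * ‖w^m‖ * C * c⁻¹ * c⁻¹ := by
    intro n m
    rw [u]
    split_ifs with h
    · rw [norm_mul, norm_mul, norm_mul, norm_mul, norm_inv, norm_inv]
      gcongr
      · exact hCle' _
      · exact hcle' _
      · exact hcle' _
    · simp only [norm_zero]
      positivity
  have hsum : Summable (fun m : ℤ => ‖q^(m^2)‖ * ‖w^m‖ * C * c⁻¹ * c⁻¹) :=
    (((sum_base hq hq0 hw).mul_right C).mul_right c⁻¹).mul_right c⁻¹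
  have htt : Tendsto (fun n : ℕ => ∑' m : ℤ, u q w n m) atTop
      (𝓝 (∑' m : ℤ, q^(m^2) * w^m * A⁻¹)) :=
    tendsto_tsum_of_dominated_convergence hsum (fun m => u_tendsto hq hq0 hw m)
      (Eventually.of_forall hbound)
  have hev : (fun n : ℕ => ∑' m : ℤ, u q w n m) =ᶠ[atTop] F q w := by
    filter_upwards [eventually_ge_atTop 1] with n hn
    obtain ⟨N, rfl⟩ : ∃ N, n = N + 1 := ⟨n - 1, by omega⟩
    exact tsum_u_eq q w hq hq0 hw N
  have hglim := tendsto_F hq hq0 hw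
  have hkey : ∑' m : ℤ, q^(m^2) * w^m * A⁻¹
      = ∏' j : ℕ, ((1 + q^(2*j+1) * w) * (1 + q^(2*j+1) * w⁻¹)) :=
    tendsto_nhds_unique (htt.congr' hev) hglim
  rw [← hkey, tsum_mul_right, mul_comm A, mul_assoc, inv_mul_cancel₀ hAne, mul_one]

end core

theorem jacobi_triple_product_aux (q y : ℂ) (hq : ‖q‖ < 1) (hy : y ≠ 0) :
    (∏' k : ℕ, ((1 - q ^ (2 * (k + 1))) * (1 + q ^ (2 * (k + 1) - 1) * y ^ 2) *
      (1 + q ^ (2 * (k + 1) - 1) * (y⁻¹) ^ 2))) =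
    ∑' k : ℤ, q ^ (k ^ 2) * y ^ (2 * k) := by
  by_cases hq0 : q = 0
  · subst hq0
    have hL : ∀ k : ℕ, ((1 - (0:ℂ) ^ (2*(k+1))) * (1 + 0 ^ (2*(k+1)-1) * y^2) *
        (1 + 0 ^ (2*(k+1)-1) * (y⁻¹)^2)) = 1 := by
      intro k
      rw [zero_pow (by omega : 2*(k+1) ≠ 0), zero_pow (by omega : 2*(k+1)-1 ≠ 0)]
      ring
    rw [tprod_congr hL, tprod_one, tsum_eq_single (0 : ℤ) ?_]
    · simp
    · intro b hb
      rw [zero_zpow _ (pow_ne_zero 2 hb), zero_mul]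
  · have hw : (y^2 : ℂ) ≠ 0 := pow_ne_zero 2 hy
    have hstep : ∀ k : ℕ, ((1 - q ^ (2*(k+1))) * (1 + q ^ (2*(k+1)-1) * y^2) *
        (1 + q ^ (2*(k+1)-1) * (y⁻¹)^2))
        = (1 - (q^2)^(k+1)) * ((1 + q^(2*k+1) * (y^2)) * (1 + q^(2*k+1) * (y^2)⁻¹)) := by
      intro k
      rw [show 2*(k+1)-1 = 2*k+1 by omega, pow_mul, inv_pow]
      ring
    rw [tprod_congr hstep, Multipliable.tprod_mul (multA hq) (multG hq hq0 hw),
      main_core hq hq0 hw]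
    refine tsum_congr fun k => ?_
    congr 1
    rw [show (y:ℂ)^2 = y*y by ring, mul_zpow, ← zpow_add₀ hy, two_mul]

end
end JTP

/-- **Jacobi triple product identity.** For a complex number `q` with `‖q‖ < 1` and a
nonzero complex number `y`, the infinite product
`∏_{k≥1} (1-q^{2k})(1+q^{2k-1}y^2)(1+q^{2k-1}y^{-2})` equals `∑_{k∈ℤ} q^{k²} y^{2k}`. -/
theorem jacobi_triple_product (q y : ℂ) (hq : ‖q‖ < 1) (hy : y ≠ 0) :
    (∏' k : ℕ, ((1 - q ^ (2 * (k + 1))) * (1 + q ^ (2 * (k + 1) - 1) * y ^ 2) *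
      (1 + q ^ (2 * (k + 1) - 1) * (y⁻¹) ^ 2))) =
    ∑' k : ℤ, q ^ (k ^ 2) * y ^ (2 * k) := by
  exact JTP.jacobi_triple_product_aux q y hq hy
end

section
/- Character identity for the decomposition of the F⊕NSR Verma module: as formal power series in q^{1/2}, ∏_{k≥1} (1+q^{k-1/2})^2/(1-q^k) = ∑_{n∈(1/2)ℤ} q^{2n^2} ∏_{k≥1} 1/(1-q^k)^2, where the sum is over all half-integers n (i.e. 2n ∈ ℤ). -/
open Finset Filter Topology

namespace CharDecomp

noncomputable def Dp (x : ℂ) (n : ℕ) : ℂ := ∏ i ∈ Finset.range n, (1 - x ^ (2 * (i + 1)))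

noncomputable def Bq (x : ℂ) (n k : ℕ) : ℂ :=
  if k ≤ n then Dp x n * (Dp x k)⁻¹ * (Dp x (n - k))⁻¹ else 0

variable {x : ℂ}

lemma norm_pow_lt (hx : ‖x‖ < 1) {j : ℕ} (hj : j ≠ 0) : ‖x ^ j‖ < 1 := by
  rw [norm_pow]; exact pow_lt_one₀ (norm_nonneg x) hx hj

lemma one_sub_pow_ne (hx : ‖x‖ < 1) {j : ℕ} (hj : j ≠ 0) : 1 - x ^ j ≠ 0 := by
  intro h
  rw [sub_eq_zero] at h
  have := norm_pow_lt hx hj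
  rw [← h] at this; simp at this

lemma one_add_pow_ne (hx : ‖x‖ < 1) {j : ℕ} (hj : j ≠ 0) : 1 + x ^ j ≠ 0 := by
  intro h
  have h2 : x ^ j = -1 := by linear_combination h
  have := norm_pow_lt hx hj
  rw [h2] at this; simp at this

lemma Dp_ne (hx : ‖x‖ < 1) (n : ℕ) : Dp x n ≠ 0 := by
  refine Finset.prod_ne_zero_iff.2 fun i _ => one_sub_pow_ne hx (by omega)

lemma Dp_succ (n : ℕ) : Dp x (n + 1) = Dp x n * (1 - x ^ (2 * (n + 1))) :=
  Finset.prod_range_succ _ _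

lemma Dp_zero : Dp x 0 = 1 := by simp [Dp]

lemma Bq_zero (hx : ‖x‖ < 1) (n : ℕ) : Bq x n 0 = 1 := by
  rw [Bq, if_pos (Nat.zero_le n), Dp_zero, Nat.sub_zero, inv_one, mul_one,
    mul_inv_cancel₀ (Dp_ne hx n)]

lemma Bq_self (hx : ‖x‖ < 1) (n : ℕ) : Bq x n n = 1 := by
  rw [Bq, if_pos (le_refl n), Nat.sub_self, Dp_zero, inv_one, mul_one,
    mul_inv_cancel₀ (Dp_ne hx n)]

lemma Bq_of_gt {n k : ℕ} (h : n < k) : Bq x n k = 0 := by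
  simp [Bq, Nat.not_le.mpr h]

lemma Bq_pascal (hx : ‖x‖ < 1) {n k : ℕ} (hk : k ≤ n) :
    Bq x (n + 1) (k + 1) = x ^ (2 * (n - k)) * Bq x n k + Bq x n (k + 1) := by
  rcases eq_or_lt_of_le hk with rfl | hlt
  · rw [Bq_self hx, Bq_self hx, Bq_of_gt (Nat.lt_succ_self _), Nat.sub_self]
    simp
  · obtain ⟨j, rfl⟩ : ∃ j, n = k + 1 + j := ⟨n - (k + 1), by omega⟩
    have h1 : k + 1 ≤ k + 1 + j := by omega
    have h2 : k + 1 + j + 1 - (k + 1) = j + 1 := by omega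
    have h3 : k + 1 + j - k = j + 1 := by omega
    have h4 : k + 1 + j - (k + 1) = j := by omega
    simp only [Bq, if_pos (by omega : k + 1 ≤ k + 1 + j + 1), if_pos h1,
      if_pos (by omega : k ≤ k + 1 + j), h2, h3, h4]
    rw [show k + 1 + j + 1 = (k + 1 + j) + 1 from rfl, Dp_succ, Dp_succ, Dp_succ]
    have dn := Dp_ne hx (k + 1 + j)
    have dk := Dp_ne hx k
    have dj := Dp_ne hx j
    have e1 := one_sub_pow_ne hx (by omega : 2 * (k + 1 + j + 1) ≠ 0)
    have e2 := one_sub_pow_ne hx (by omega : 2 * (k + 1) ≠ 0)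
    have e3 := one_sub_pow_ne hx (by omega : 2 * (j + 1) ≠ 0)
    field_simp
    ring


lemma qbinom (hx : ‖x‖ < 1) (hx0 : x ≠ 0) (t : ℂ) : ∀ n : ℕ,
    ∏ j ∈ Finset.range n, (1 + x ^ (2 * (j : ℤ)) * t)
      = ∑ k ∈ Finset.range (n + 1), x ^ ((k : ℤ) * ((k : ℤ) - 1)) * Bq x n k * t ^ k := by
  intro n
  induction n with
  | zero => simp [Bq_zero hx]
  | succ n ih =>
    rw [Finset.prod_range_succ, ih]
    rw [Finset.sum_range_succ' (fun k => x ^ ((k : ℤ) * ((k : ℤ) - 1)) * Bq x (n + 1) k * t ^ k)]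
    have hpt : ∀ k ∈ Finset.range (n + 1),
        x ^ (((k : ℤ) + 1) * ((k : ℤ) + 1 - 1)) * Bq x (n + 1) (k + 1) * t ^ (k + 1)
          = x ^ (2 * (n : ℤ)) * (x ^ ((k : ℤ) * ((k : ℤ) - 1)) * Bq x n k * t ^ k) * t
            + x ^ (((k : ℤ) + 1) * ((k : ℤ) + 1 - 1)) * Bq x n (k + 1) * t ^ (k + 1) := by
      intro k hk
      have hkn : k ≤ n := by simpa using Nat.lt_succ_iff.mp (Finset.mem_range.mp hk)
      rw [Bq_pascal hx hkn]
      have hc : ((2 * (n - k) : ℕ) : ℤ) = 2 * (n : ℤ) - 2 * (k : ℤ) := by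
        push_cast [Nat.cast_sub hkn]; ring
      have hz : (x : ℂ) ^ (2 * (n - k)) = x ^ (2 * (n : ℤ) - 2 * (k : ℤ)) := by
        rw [← zpow_natCast, hc]
      have key : x ^ (((k : ℤ) + 1) * ((k : ℤ) + 1 - 1)) * x ^ (2 * (n : ℤ) - 2 * (k : ℤ))
          = x ^ (2 * (n : ℤ)) * x ^ ((k : ℤ) * ((k : ℤ) - 1)) := by
        rw [← zpow_add₀ hx0, ← zpow_add₀ hx0]; congr 1; ring
      rw [hz]
      linear_combination (Bq x n k * t ^ (k + 1)) * key
    push_cast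
    rw [Finset.sum_congr rfl hpt, Finset.sum_add_distrib]
    have hsum1 : ∑ k ∈ Finset.range (n + 1),
        x ^ (2 * (n : ℤ)) * (x ^ ((k : ℤ) * ((k : ℤ) - 1)) * Bq x n k * t ^ k) * t
        = x ^ (2 * (n : ℤ)) * t *
          ∑ k ∈ Finset.range (n + 1), x ^ ((k : ℤ) * ((k : ℤ) - 1)) * Bq x n k * t ^ k := by
      rw [Finset.mul_sum]; exact Finset.sum_congr rfl fun k _ => by ring
    have hsum2 : ∑ k ∈ Finset.range (n + 1),
        x ^ (((k : ℤ) + 1) * ((k : ℤ) + 1 - 1)) * Bq x n (k + 1) * t ^ (k + 1)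
        = (∑ k ∈ Finset.range (n + 1), x ^ ((k : ℤ) * ((k : ℤ) - 1)) * Bq x n k * t ^ k) - 1 := by
      have := Finset.sum_range_succ' (fun k => x ^ ((k : ℤ) * ((k : ℤ) - 1)) * Bq x n k * t ^ k)
        (n + 1)
      rw [Finset.sum_range_succ (fun k => x ^ ((k : ℤ) * ((k : ℤ) - 1)) * Bq x n k * t ^ k)
        (n + 1)] at this
      push_cast at this ⊢
      rw [Bq_of_gt (Nat.lt_succ_self n)] at this
      simp only [mul_zero, zero_mul, add_zero] at this
      rw [this]
      simp [Bq_zero hx]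
    rw [hsum1, hsum2]
    simp only [zpow_zero, one_mul, mul_one, pow_zero]
    rw [Bq_zero hx]
    ring


lemma prod_zpow_eq (hx0 : x ≠ 0) (e : ℕ → ℤ) (N : ℕ) :
    ∏ i ∈ Finset.range N, x ^ (e i) = x ^ (∑ i ∈ Finset.range N, e i) := by
  induction N with
  | zero => simp
  | succ n ih => rw [Finset.prod_range_succ, Finset.sum_range_succ, zpow_add₀ hx0, ih]

lemma sum_odd_int (N : ℕ) : ∑ i ∈ Finset.range N, (2 * (i : ℤ) + 1) = (N : ℤ) ^ 2 := by
  induction N with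
  | zero => simp
  | succ n ih => rw [Finset.sum_range_succ, ih]; push_cast; ring

lemma gauss_finite (hx : ‖x‖ < 1) (hx0 : x ≠ 0) (N : ℕ) :
    (∏ j ∈ Finset.range N, (1 + x ^ (2 * j + 1))) ^ 2
      = ∑ k ∈ Finset.range (2 * N + 1), x ^ (((k : ℤ) - N) ^ 2) * Bq x (2 * N) k := by
  have h := qbinom hx hx0 (x ^ (1 - 2 * (N : ℤ))) (2 * N)
  -- rewrite the left side of h
  have hL1 : ∏ j ∈ Finset.range (2 * N), (1 + x ^ (2 * (j : ℤ)) * x ^ (1 - 2 * (N : ℤ)))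
      = ∏ j ∈ Finset.range (2 * N), (1 + x ^ (2 * (j : ℤ) + 1 - 2 * (N : ℤ))) := by
    refine Finset.prod_congr rfl fun j _ => ?_
    rw [← zpow_add₀ hx0]; ring_nf
  have hL2 : ∏ j ∈ Finset.range (2 * N), (1 + x ^ (2 * (j : ℤ) + 1 - 2 * (N : ℤ)))
      = (∏ i ∈ Finset.range N, (1 + x ^ (2 * (i : ℤ) + 1 - 2 * (N : ℤ))))
        * ∏ i ∈ Finset.range N, (1 + x ^ (2 * i + 1)) := by
    rw [two_mul, Finset.prod_range_add]
    congr 1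
    refine Finset.prod_congr rfl fun i _ => ?_
    have : 2 * ((N : ℤ) + i) + 1 - 2 * N = ((2 * i + 1 : ℕ) : ℤ) := by push_cast; ring
    rw [show ((N + i : ℕ) : ℤ) = (N : ℤ) + i by push_cast; ring, this, zpow_natCast]
  have hL3 : ∏ i ∈ Finset.range N, (1 + x ^ (2 * (i : ℤ) + 1 - 2 * (N : ℤ)))
      = x ^ (-(N : ℤ) ^ 2) * ∏ i ∈ Finset.range N, (1 + x ^ (2 * i + 1)) := by
    have hpt : ∀ i ∈ Finset.range N, (1 : ℂ) + x ^ (2 * (i : ℤ) + 1 - 2 * (N : ℤ))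
        = x ^ (2 * (i : ℤ) + 1 - 2 * (N : ℤ)) * (1 + x ^ (2 * (N : ℤ) - (2 * i + 1))) := by
      intro i _
      rw [mul_add, mul_one, ← zpow_add₀ hx0,
        show (2 * (i : ℤ) + 1 - 2 * N) + (2 * (N : ℤ) - (2 * i + 1)) = 0 by ring, zpow_zero,
        add_comm]
    rw [Finset.prod_congr rfl hpt, Finset.prod_mul_distrib, prod_zpow_eq hx0]
    congr 1
    · congr 1
      rw [Finset.sum_sub_distrib, sum_odd_int, Finset.sum_const, Finset.card_range]
      push_cast; ring
    · rw [← Finset.prod_range_reflect (fun i => 1 + x ^ (2 * i + 1)) N]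
      refine Finset.prod_congr rfl fun j hj => ?_
      have hjN : j < N := Finset.mem_range.mp hj
      have : 2 * (N : ℤ) - (2 * j + 1) = ((2 * (N - 1 - j) + 1 : ℕ) : ℤ) := by
        have h1 : (1:ℕ) ≤ N := by omega
        push_cast [Nat.cast_sub (by omega : j ≤ N - 1), Nat.cast_sub h1]
        ring
      rw [this, zpow_natCast]
  -- rewrite the right side of h
  have hR : ∑ k ∈ Finset.range (2 * N + 1),
      x ^ ((k : ℤ) * ((k : ℤ) - 1)) * Bq x (2 * N) k * (x ^ (1 - 2 * (N : ℤ))) ^ k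
      = x ^ (-(N : ℤ) ^ 2) *
        ∑ k ∈ Finset.range (2 * N + 1), x ^ (((k : ℤ) - N) ^ 2) * Bq x (2 * N) k := by
    rw [Finset.mul_sum]
    refine Finset.sum_congr rfl fun k _ => ?_
    rw [← zpow_natCast (x ^ (1 - 2 * (N : ℤ))) k, ← zpow_mul]
    have key : x ^ ((k : ℤ) * ((k : ℤ) - 1)) * x ^ ((1 - 2 * (N : ℤ)) * k)
        = x ^ (-(N : ℤ) ^ 2) * x ^ (((k : ℤ) - N) ^ 2) := by
      rw [← zpow_add₀ hx0, ← zpow_add₀ hx0]; congr 1; ring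
    linear_combination Bq x (2 * N) k * key
  rw [hL1, hL2, hL3, hR] at h
  refine mul_left_cancel₀ (zpow_ne_zero (-(N : ℤ) ^ 2) hx0) ?_
  linear_combination h


lemma hasProd_one_add_cx {f : ℕ → ℂ} {r : ℝ} (hr : r < 1) (hb : ∀ n, ‖f n‖ ≤ r)
    (hs : Summable fun n => ‖f n‖) :
    HasProd (fun n => 1 + f n) (∏' n, (1 + f n)) ∧ (∏' n, (1 + f n)) ≠ 0 := by
  have hr0 : 0 ≤ r := le_trans (norm_nonneg _) (hb 0)
  have hne : ∀ n, 1 + f n ≠ 0 := by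
    intro n h
    have h2 : f n = -1 := by linear_combination h
    have := hb n
    rw [h2] at this; simp at this; linarith
  have hlog : Summable fun n => Complex.log (1 + f n) := by
    refine Summable.of_norm_bounded (g := fun n => (r * (1 - r)⁻¹ / 2 + 1) * ‖f n‖)
      (hs.mul_left _) fun n => ?_
    have h1 : ‖f n‖ < 1 := lt_of_le_of_lt (hb n) hr
    refine le_trans (Complex.norm_log_one_add_le h1) ?_
    have h2 : ‖f n‖ ^ 2 * (1 - ‖f n‖)⁻¹ / 2 ≤ ‖f n‖ * (r * (1 - r)⁻¹ / 2) := by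
      have h3 : (1 - ‖f n‖)⁻¹ ≤ (1 - r)⁻¹ := by
        apply inv_anti₀ (by linarith) (by linarith [hb n])
      have h4 : ‖f n‖ ^ 2 ≤ ‖f n‖ * r := by
        rw [pow_two]; exact mul_le_mul_of_nonneg_left (hb n) (norm_nonneg _)
      calc ‖f n‖ ^ 2 * (1 - ‖f n‖)⁻¹ / 2 ≤ (‖f n‖ * r) * (1 - r)⁻¹ / 2 := by
            apply div_le_div_of_nonneg_right ?_ (by norm_num)
            · have h5 : (0:ℝ) ≤ 1 - ‖f n‖ := by linarith
              have h6 : (0:ℝ) ≤ (1 - ‖f n‖)⁻¹ := by positivity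
              exact mul_le_mul h4 h3 h6 (by positivity)
          _ = ‖f n‖ * (r * (1 - r)⁻¹ / 2) := by ring
    linarith
  have hp : HasProd (fun n => 1 + f n) (Complex.exp (∑' n, Complex.log (1 + f n))) := by
    have := hlog.hasSum.cexp
    rw [show Complex.exp ∘ (fun n => Complex.log (1 + f n)) = fun n => 1 + f n from
      funext fun n => Complex.exp_log (hne n)] at this
    exact this
  exact ⟨hp.tprod_eq ▸ hp, hp.tprod_eq ▸ Complex.exp_ne_zero _⟩

lemma hasProd_inv_cx {f : ℕ → ℂ} {a : ℂ} (h : HasProd f a) (ha : a ≠ 0) :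
    HasProd (fun n => (f n)⁻¹) a⁻¹ := by
  have := (Filter.Tendsto.inv₀ h ha)
  exact this.congr fun s => by rw [← Finset.prod_inv_distrib]


set_option maxHeartbeats 1000000 in
theorem gauss_limit (hx : ‖x‖ < 1) (hx0 : x ≠ 0) :
    (∏' j : ℕ, (1 + x ^ (2 * j + 1))) ^ 2
      = (∑' m : ℤ, x ^ (m ^ 2)) * (∏' i : ℕ, (1 - x ^ (2 * (i + 1))))⁻¹ := by
  set r := ‖x‖ with hr_def
  have hr0 : 0 ≤ r := norm_nonneg x
  have hr : r < 1 := hx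
  -- summability facts
  have hgeo : Summable (fun n : ℕ => r ^ n) := summable_geometric_of_lt_one hr0 hr
  have hsE : Summable (fun j : ℕ => ‖x ^ (2 * j + 1)‖) := by
    refine hgeo.of_nonneg_of_le (fun n => norm_nonneg _) fun n => ?_
    rw [norm_pow]
    exact pow_le_pow_of_le_one hr0 hr.le (by omega)
  have hsD : Summable (fun i : ℕ => ‖-(x ^ (2 * (i + 1)))‖) := by
    refine hgeo.of_nonneg_of_le (fun n => norm_nonneg _) fun n => ?_
    rw [norm_neg, norm_pow]
    exact pow_le_pow_of_le_one hr0 hr.le (by omega)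
  have hbE : ∀ j : ℕ, ‖x ^ (2 * j + 1)‖ ≤ r := by
    intro j
    rw [norm_pow, ← pow_one r]
    exact pow_le_pow_of_le_one hr0 hr.le (by omega)
  have hbD : ∀ i : ℕ, ‖-(x ^ (2 * (i + 1)))‖ ≤ r := by
    intro i
    rw [norm_neg, norm_pow, ← pow_one r]
    exact pow_le_pow_of_le_one hr0 hr.le (by omega)
  obtain ⟨hE, hEne⟩ := hasProd_one_add_cx hr hbE hsE
  obtain ⟨hD0, hPne0⟩ := hasProd_one_add_cx hr hbD hsD
  have hfun : (fun i : ℕ => 1 + -(x ^ (2 * (i + 1)))) = fun i : ℕ => 1 - x ^ (2 * (i + 1)) :=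
    funext fun i => by ring
  rw [hfun] at hD0 hPne0
  set P := ∏' i : ℕ, (1 - x ^ (2 * (i + 1))) with hP_def
  set EE := ∏' j : ℕ, (1 + x ^ (2 * j + 1)) with hEE_def
  have hDten : Tendsto (fun n => Dp x n) atTop (𝓝 P) := hD0.tendsto_prod_nat
  -- real constants, via 1 + t ≤ exp t
  have hr2 : r ^ 2 < 1 := by nlinarith
  have hr2' : (0:ℝ) < 1 - r ^ 2 := by linarith
  have hsr : Summable (fun i : ℕ => r ^ (2 * (i + 1))) := by
    refine hgeo.of_nonneg_of_le (fun n => by positivity) fun n => ?_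
    exact pow_le_pow_of_le_one hr0 hr.le (by omega)
  set Sa := ∑' i : ℕ, r ^ (2 * (i + 1)) with hSa_def
  have hSa0 : 0 ≤ Sa := tsum_nonneg fun i => by positivity
  set Cnum := Real.exp Sa with hCnum_def
  have hnum : ∀ n, ‖Dp x n‖ ≤ Cnum := by
    intro n
    rw [Dp, norm_prod]
    calc ∏ i ∈ Finset.range n, ‖1 - x ^ (2 * (i + 1))‖
        ≤ ∏ i ∈ Finset.range n, Real.exp (r ^ (2 * (i + 1))) := by
          refine Finset.prod_le_prod (fun i _ => norm_nonneg _) fun i _ => ?_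
          refine le_trans (norm_sub_le _ _) ?_
          rw [norm_one, norm_pow]
          linarith [Real.add_one_le_exp (r ^ (2 * (i + 1)))]
      _ = Real.exp (∑ i ∈ Finset.range n, r ^ (2 * (i + 1))) := (Real.exp_sum _ _).symm
      _ ≤ Cnum := Real.exp_le_exp.2 (Summable.sum_le_tsum _ (fun i _ => by positivity) hsr)
  have hposden : ∀ i : ℕ, (0 : ℝ) < 1 - r ^ (2 * (i + 1)) := by
    intro i
    have : r ^ (2 * (i + 1)) < 1 := pow_lt_one₀ hr0 hr (by omega)
    linarith
  have hsb : Summable (fun i : ℕ => r ^ (2 * (i + 1)) * (1 - r ^ 2)⁻¹) := hsr.mul_right _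
  set Sb := ∑' i : ℕ, r ^ (2 * (i + 1)) * (1 - r ^ 2)⁻¹ with hSb_def
  have hSb0 : 0 ≤ Sb := tsum_nonneg fun i => by positivity
  set Cden := Real.exp Sb with hCden_def
  have hinvkey : ∀ i : ℕ, (1 - r ^ (2 * (i + 1)))⁻¹
      ≤ Real.exp (r ^ (2 * (i + 1)) * (1 - r ^ 2)⁻¹) := by
    intro i
    have h3 := hposden i
    have ha : (0:ℝ) ≤ r ^ (2 * (i + 1)) := by positivity
    have h4 : r ^ (2 * (i + 1)) ≤ r ^ 2 := pow_le_pow_of_le_one hr0 hr.le (by omega)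
    have hcpos : (0:ℝ) ≤ (1 - r ^ 2)⁻¹ := by positivity
    have hc : (1 - r ^ 2)⁻¹ * (1 - r ^ 2) = 1 := inv_mul_cancel₀ (ne_of_gt hr2')
    have h8 : 1 ≤ (1 - r ^ 2)⁻¹ * (1 - r ^ (2 * (i + 1))) := by
      calc (1:ℝ) = (1 - r ^ 2)⁻¹ * (1 - r ^ 2) := hc.symm
        _ ≤ (1 - r ^ 2)⁻¹ * (1 - r ^ (2 * (i + 1))) :=
            mul_le_mul_of_nonneg_left (by linarith) hcpos
    calc (1 - r ^ (2 * (i + 1)))⁻¹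
        ≤ 1 + r ^ (2 * (i + 1)) * (1 - r ^ 2)⁻¹ := by
          rw [inv_eq_one_div, div_le_iff₀ h3]
          nlinarith [mul_le_mul_of_nonneg_left h8 ha]
      _ ≤ Real.exp (r ^ (2 * (i + 1)) * (1 - r ^ 2)⁻¹) := by
          linarith [Real.add_one_le_exp (r ^ (2 * (i + 1)) * (1 - r ^ 2)⁻¹)]
  have hden : ∀ n, ‖(Dp x n)⁻¹‖ ≤ Cden := by
    intro n
    rw [norm_inv, Dp, norm_prod, ← Finset.prod_inv_distrib]
    calc ∏ i ∈ Finset.range n, ‖1 - x ^ (2 * (i + 1))‖⁻¹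
        ≤ ∏ i ∈ Finset.range n, Real.exp (r ^ (2 * (i + 1)) * (1 - r ^ 2)⁻¹) := by
          refine Finset.prod_le_prod (fun i _ => by positivity) fun i _ => ?_
          refine le_trans ?_ (hinvkey i)
          refine inv_anti₀ (hposden i) ?_
          have := norm_sub_norm_le (1 : ℂ) (x ^ (2 * (i + 1)))
          rw [norm_one, norm_pow] at this
          linarith
      _ = Real.exp (∑ i ∈ Finset.range n, r ^ (2 * (i + 1)) * (1 - r ^ 2)⁻¹) :=
          (Real.exp_sum _ _).symm
      _ ≤ Cden := Real.exp_le_exp.2 (Summable.sum_le_tsum _ (fun i _ => by positivity) hsb)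
  have h1num : (1 : ℝ) ≤ Cnum := Real.one_le_exp hSa0
  have h1den : (1 : ℝ) ≤ Cden := Real.one_le_exp hSb0
  set C := Cnum * Cden * Cden with hC_def
  have hC0 : 0 ≤ C := by rw [hC_def, hCnum_def, hCden_def]; positivity
  have hBq : ∀ n k, ‖Bq x n k‖ ≤ C := by
    intro n k
    rw [Bq]
    split
    · rw [norm_mul, norm_mul]
      refine mul_le_mul (mul_le_mul (hnum n) (hden k) (norm_nonneg _) (by linarith)) (hden _)
        (norm_nonneg _) (by nlinarith)
    · rw [norm_zero]; exact hC0
  -- the doubly-indexed family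
  set F : ℕ → ℤ → ℂ := fun N m =>
    if m.natAbs ≤ N then x ^ (m ^ 2) * Bq x (2 * N) (m + N).toNat else 0 with hF_def
  have hFsum : ∀ N, ∑ k ∈ Finset.range (2 * N + 1), x ^ (((k : ℤ) - N) ^ 2) * Bq x (2 * N) k
      = ∑' m : ℤ, F N m := by
    intro N
    rw [tsum_eq_sum (s := (Finset.range (2 * N + 1)).map
      ⟨fun k : ℕ => (k : ℤ) - N, @id (Function.Injective fun k : ℕ => (k : ℤ) - N) (by
        intro a b h
        have hab : (a : ℤ) - N = (b : ℤ) - N := h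
        omega)⟩) ?_]
    · rw [Finset.sum_map]
      refine Finset.sum_congr rfl fun k hk => ?_
      have hk' : k < 2 * N + 1 := Finset.mem_range.mp hk
      simp only [Function.Embedding.coeFn_mk, hF_def]
      rw [if_pos (by omega : ((k : ℤ) - N).natAbs ≤ N)]
      congr 2
      omega
    · intro m hm
      simp only [hF_def]
      rw [if_neg ?_]
      intro hle
      apply hm
      simp only [Finset.mem_map, Function.Embedding.coeFn_mk, Finset.mem_range]
      exact ⟨(m + N).toNat, by omega, by omega⟩
  -- pointwise limits
  have hFlim : ∀ m : ℤ, Tendsto (fun N => F N m) atTop (𝓝 (x ^ (m ^ 2) * P⁻¹)) := by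
    intro m
    have h2N : Tendsto (fun N : ℕ => 2 * N) atTop atTop :=
      tendsto_atTop_atTop.2 fun b => ⟨b, fun a ha => by omega⟩
    have hplus : Tendsto (fun N : ℕ => ((m + N : ℤ)).toNat) atTop atTop :=
      tendsto_atTop_atTop.2 fun b => ⟨b + m.natAbs, fun a ha => by omega⟩
    have hminus : Tendsto (fun N : ℕ => (((N : ℤ) - m)).toNat) atTop atTop :=
      tendsto_atTop_atTop.2 fun b => ⟨b + m.natAbs, fun a ha => by omega⟩
    have heq : (fun N => x ^ (m ^ 2) * (Dp x (2 * N) * (Dp x ((m + N : ℤ)).toNat)⁻¹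
        * (Dp x (((N : ℤ) - m)).toNat)⁻¹)) =ᶠ[atTop] fun N => F N m := by
      filter_upwards [eventually_ge_atTop m.natAbs] with N hN
      simp only [hF_def]
      rw [if_pos hN, Bq, if_pos (by omega : ((m + N : ℤ)).toNat ≤ 2 * N)]
      rw [show 2 * N - ((m + N : ℤ)).toNat = (((N : ℤ) - m)).toNat by omega]
    refine Tendsto.congr' heq ?_
    refine Tendsto.const_mul _ ?_
    have h9 : P * P⁻¹ * P⁻¹ = P⁻¹ := by field_simp
    rw [← h9]
    exact ((hDten.comp h2N).mul ((hDten.comp hplus).inv₀ hPne0)).mul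
      ((hDten.comp hminus).inv₀ hPne0)
  -- uniform bound
  have hzpow_norm : ∀ m : ℤ, ‖x ^ (m ^ 2)‖ ≤ r ^ m.natAbs := by
    intro m
    have hxx : x ^ (m ^ 2) = x ^ (m.natAbs ^ 2 : ℕ) := by
      rw [← zpow_natCast]
      congr 1
      push_cast [Int.natCast_natAbs]
      rw [sq_abs]
    rw [hxx, norm_pow]
    exact pow_le_pow_of_le_one hr0 hr.le (Nat.le_self_pow (by norm_num) _)
  have hFbd : ∀ N : ℕ, ∀ m : ℤ, ‖F N m‖ ≤ C * r ^ m.natAbs := by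
    intro N m
    simp only [hF_def]
    split
    · rw [norm_mul]
      calc ‖x ^ (m ^ 2)‖ * ‖Bq x (2 * N) (m + N).toNat‖
          ≤ r ^ m.natAbs * C :=
            mul_le_mul (hzpow_norm m) (hBq _ _) (norm_nonneg _) (by positivity)
        _ = C * r ^ m.natAbs := by ring
    · rw [norm_zero]; positivity
  have hsummbd : Summable (fun m : ℤ => C * r ^ m.natAbs) := by
    apply Summable.mul_left
    refine Summable.of_nat_of_neg (hgeo.congr fun n => by simp) (hgeo.congr fun n => by simp)
  -- Tannery's theorem
  have htan : Tendsto (fun N => ∑' m : ℤ, F N m) atTop (𝓝 (∑' m : ℤ, x ^ (m ^ 2) * P⁻¹)) :=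
    tendsto_tsum_of_dominated_convergence hsummbd hFlim
      (Eventually.of_forall fun N m => hFbd N m)
  have hEten : Tendsto (fun N => (∏ j ∈ Finset.range N, (1 + x ^ (2 * j + 1))) ^ 2) atTop
      (𝓝 (EE ^ 2)) := hE.tendsto_prod_nat.pow 2
  have hkey := tendsto_nhds_unique
    (hEten.congr fun N => by rw [gauss_finite hx hx0 N, hFsum N]) htan
  rw [tsum_mul_right] at hkey
  exact hkey

end CharDecomp

open CharDecomp Filter
/-- **Character identity for the decomposition of the `F ⊕ NSR` Verma module.**
Writing `x = q^{1/2}` with `‖x‖ < 1`, the identity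
`∏_{k≥1} (1+q^{k-1/2})²/(1-q^k) = ∑_{2n∈ℤ} q^{2n²} ∏_{k≥1} 1/(1-q^k)²` reads
(with `n = m/2`, `m ∈ ℤ`, so `q^{2n²} = x^{m²}` and `q^k = x^{2k}`):
`∏_{k≥1} (1+x^{2k-1})²/(1-x^{2k}) = (∑_{m∈ℤ} x^{m²}) · ∏_{k≥1} 1/(1-x^{2k})²`. -/
theorem character_decomposition_identity (x : ℂ) (hx : ‖x‖ < 1) :
    (∏' k : ℕ, ((1 + x ^ (2 * (k + 1) - 1)) ^ 2 / (1 - x ^ (2 * (k + 1))))) =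
    (∑' m : ℤ, x ^ (m ^ 2)) * ∏' k : ℕ, (1 / (1 - x ^ (2 * (k + 1))) ^ 2) := by
  by_cases hx0 : x = 0
  · subst hx0
    have h1 : (fun k : ℕ => ((1 + (0:ℂ) ^ (2 * (k + 1) - 1)) ^ 2 / (1 - (0:ℂ) ^ (2 * (k + 1)))))
        = fun _ => 1 := funext fun k => by
      rw [zero_pow (by omega : 2 * (k + 1) - 1 ≠ 0), zero_pow (by omega : 2 * (k + 1) ≠ 0)]
      norm_num
    have h2 : (fun k : ℕ => 1 / (1 - (0:ℂ) ^ (2 * (k + 1))) ^ 2) = fun _ => 1 :=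
      funext fun k => by
        rw [zero_pow (by omega : 2 * (k + 1) ≠ 0)]
        norm_num
    have h3 : ∑' m : ℤ, (0:ℂ) ^ (m ^ 2) = 1 := by
      rw [tsum_eq_single 0 (fun m hm => zero_zpow _ (pow_ne_zero 2 hm))]
      norm_num
    rw [h1, h2, h3, tprod_one]
    norm_num
  · -- set up the convergent products
    set r := ‖x‖ with hr_def
    have hr0 : 0 ≤ r := norm_nonneg x
    have hr : r < 1 := hx
    have hgeo : Summable (fun n : ℕ => r ^ n) := summable_geometric_of_lt_one hr0 hr
    have hsE : Summable (fun j : ℕ => ‖x ^ (2 * j + 1)‖) := by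
      refine hgeo.of_nonneg_of_le (fun n => norm_nonneg _) fun n => ?_
      rw [norm_pow]
      exact pow_le_pow_of_le_one hr0 hr.le (by omega)
    have hsD : Summable (fun i : ℕ => ‖-(x ^ (2 * (i + 1)))‖) := by
      refine hgeo.of_nonneg_of_le (fun n => norm_nonneg _) fun n => ?_
      rw [norm_neg, norm_pow]
      exact pow_le_pow_of_le_one hr0 hr.le (by omega)
    have hbE : ∀ j : ℕ, ‖x ^ (2 * j + 1)‖ ≤ r := by
      intro j
      rw [norm_pow, ← pow_one r]
      exact pow_le_pow_of_le_one hr0 hr.le (by omega)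
    have hbD : ∀ i : ℕ, ‖-(x ^ (2 * (i + 1)))‖ ≤ r := by
      intro i
      rw [norm_neg, norm_pow, ← pow_one r]
      exact pow_le_pow_of_le_one hr0 hr.le (by omega)
    obtain ⟨hE, hEne⟩ := hasProd_one_add_cx hr hbE hsE
    obtain ⟨hD0, hPne0⟩ := hasProd_one_add_cx hr hbD hsD
    have hfun : (fun i : ℕ => 1 + -(x ^ (2 * (i + 1)))) = fun i : ℕ => 1 - x ^ (2 * (i + 1)) :=
      funext fun i => by ring
    rw [hfun] at hD0 hPne0
    set P := ∏' i : ℕ, (1 - x ^ (2 * (i + 1))) with hP_def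
    set EE := ∏' j : ℕ, (1 + x ^ (2 * j + 1)) with hEE_def
    have hDinv : HasProd (fun i : ℕ => (1 - x ^ (2 * (i + 1)))⁻¹) P⁻¹ :=
      hasProd_inv_cx hD0 hPne0
    -- left-hand side
    have hLfun : (fun k : ℕ => ((1 + x ^ (2 * (k + 1) - 1)) ^ 2 / (1 - x ^ (2 * (k + 1)))))
        = fun k : ℕ => ((1 + x ^ (2 * k + 1)) * (1 + x ^ (2 * k + 1)))
          * (1 - x ^ (2 * (k + 1)))⁻¹ := by
      funext k
      rw [show 2 * (k + 1) - 1 = 2 * k + 1 by omega]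
      ring
    have hL : HasProd (fun k : ℕ => ((1 + x ^ (2 * k + 1)) * (1 + x ^ (2 * k + 1)))
        * (1 - x ^ (2 * (k + 1)))⁻¹) (EE * EE * P⁻¹) := (hE.mul hE).mul hDinv
    -- right-hand side product
    have hRfun : (fun k : ℕ => 1 / (1 - x ^ (2 * (k + 1))) ^ 2)
        = fun k : ℕ => (1 - x ^ (2 * (k + 1)))⁻¹ * (1 - x ^ (2 * (k + 1)))⁻¹ := by
      funext k
      rw [one_div, sq, mul_inv]
    have hR : HasProd (fun k : ℕ => (1 - x ^ (2 * (k + 1)))⁻¹ * (1 - x ^ (2 * (k + 1)))⁻¹)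
        (P⁻¹ * P⁻¹) := hDinv.mul hDinv
    rw [hLfun, hRfun, hL.tprod_eq, hR.tprod_eq]
    have hG := gauss_limit hx hx0
    rw [← hP_def, ← hEE_def] at hG
    rw [show EE * EE * P⁻¹ = EE ^ 2 * P⁻¹ by ring, hG]
    ring
end

section
/- Sum rule for shifted conformal weights: with Δ(P,β) = (β+β^{-1})^2/4 - P^2, Δ^{NS} = ((b+b^{-1})^2/4 - P^2)/2, P^(1) = P/√(2-2b^2), P^(2) = P/√(2-2b^{-2}), (b^(1))^2 = 2b^2/(1-b^2), (b^(2))^{-2} = 2b^{-2}/(1-b^{-2}), and P^(1)_n = P^(1) + n·b^(1), P^(2)_n = P^(2) + n·(b^(2))^{-1}, one has Δ(P^(1)_n, b^(1)) + Δ(P^(2)_n, b^(2)) = Δ^{NS} + 2n^2 for every n with 2n ∈ ℤ. -/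
/-- **Sum rule for the shifted conformal weights.** With
`Δ(P,β) = (β+β⁻¹)²/4 - P²`, `Δᴺˢ = ((b+b⁻¹)²/4 - P²)/2`,
`P⁽¹⁾ = P/√(2-2b²)`, `P⁽²⁾ = P/√(2-2b⁻²)`, and the square roots `s₁, s₂` chosen
consistently so that `b⁽¹⁾ = 2b/s₁` (whence `(b⁽¹⁾)² = 2b²/(1-b²)`) and
`(b⁽²⁾)⁻¹ = 2b⁻¹/s₂` (whence `(b⁽²⁾)⁻² = 2b⁻²/(1-b⁻²)`), and with
`P⁽¹⁾ₙ = P⁽¹⁾ + n·b⁽¹⁾`, `P⁽²⁾ₙ = P⁽²⁾ + n·(b⁽²⁾)⁻¹`, one has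
`Δ(P⁽¹⁾ₙ, b⁽¹⁾) + Δ(P⁽²⁾ₙ, b⁽²⁾) = Δᴺˢ + 2n²` for every half-integer `n`. -/
theorem shifted_weight_sum_rule (b P : ℂ) (hb : b ≠ 0) (hb2 : b ^ 2 ≠ 1)
    (s1 s2 : ℂ) (hs1 : s1 ^ 2 = 2 - 2 * b ^ 2) (hs2 : s2 ^ 2 = 2 - 2 * (b⁻¹) ^ 2)
    (hs1' : s1 ≠ 0) (hs2' : s2 ≠ 0)
    (n : ℂ) (hn : ∃ m : ℤ, n = (m : ℂ) / 2)
    (Δ : ℂ → ℂ → ℂ) (hΔ : ∀ p β : ℂ, Δ p β = (β + β⁻¹) ^ 2 / 4 - p ^ 2) :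
    Δ (P / s1 + n * (2 * b / s1)) (2 * b / s1) +
      Δ (P / s2 + n * (2 * b⁻¹ / s2)) ((2 * b⁻¹ / s2)⁻¹) =
    ((b + b⁻¹) ^ 2 / 4 - P ^ 2) / 2 + 2 * n ^ 2 := by
  have hbinv : b⁻¹ ≠ 0 := inv_ne_zero hb
  have h1b : (1 : ℂ) - b ^ 2 ≠ 0 := sub_ne_zero.mpr (Ne.symm hb2)
  have hb2inv : (b⁻¹) ^ 2 ≠ 1 := by simp [inv_pow, inv_eq_one, hb2]
  have h1binv : (1 : ℂ) - (b⁻¹) ^ 2 ≠ 0 := sub_ne_zero.mpr (Ne.symm hb2inv)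
  have hd1 : (2 : ℂ) - 2 * b ^ 2 ≠ 0 := by
    have h : (2 : ℂ) - 2 * b ^ 2 = 2 * (1 - b ^ 2) := by ring
    rw [h]; exact mul_ne_zero two_ne_zero h1b
  have hd2 : (2 : ℂ) - 2 * (b⁻¹) ^ 2 ≠ 0 := by
    have h : (2 : ℂ) - 2 * (b⁻¹) ^ 2 = 2 * (1 - (b⁻¹) ^ 2) := by ring
    rw [h]; exact mul_ne_zero two_ne_zero h1binv
  have key : ∀ c s : ℂ, c ≠ 0 → s ≠ 0 →
      (2 * c / s + (2 * c / s)⁻¹) ^ 2 / 4 - (P / s + n * (2 * c / s)) ^ 2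
        = (4 * c ^ 2 / s ^ 2 + 2 + s ^ 2 / (4 * c ^ 2)) / 4
          - (P + 2 * n * c) ^ 2 / s ^ 2 := by
    intro c s hc hs
    rw [inv_div]
    field_simp [hc, hs]
    ring
  have h1 : Δ (P / s1 + n * (2 * b / s1)) (2 * b / s1)
      = (4 * b ^ 2 / s1 ^ 2 + 2 + s1 ^ 2 / (4 * b ^ 2)) / 4
        - (P + 2 * n * b) ^ 2 / s1 ^ 2 := by
    rw [hΔ]; exact key b s1 hb hs1'
  have h2 : Δ (P / s2 + n * (2 * b⁻¹ / s2)) ((2 * b⁻¹ / s2)⁻¹)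
      = (4 * (b⁻¹) ^ 2 / s2 ^ 2 + 2 + s2 ^ 2 / (4 * (b⁻¹) ^ 2)) / 4
        - (P + 2 * n * b⁻¹) ^ 2 / s2 ^ 2 := by
    rw [hΔ, inv_inv, add_comm ((2 * b⁻¹ / s2)⁻¹)]
    exact key b⁻¹ s2 hbinv hs2'
  have hd1' : (2 : ℂ) * b ^ 2 - 2 ≠ 0 := by
    have h : (2 : ℂ) * b ^ 2 - 2 = -(2 - 2 * b ^ 2) := by ring
    rw [h]; exact neg_ne_zero.mpr hd1
  have e1 : 4 * (b⁻¹) ^ 2 / (2 - 2 * (b⁻¹) ^ 2) = 4 / (2 * b ^ 2 - 2) := by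
    field_simp
  have e2 : (2 - 2 * (b⁻¹) ^ 2) / (4 * (b⁻¹) ^ 2) = (2 * b ^ 2 - 2) / 4 := by
    field_simp
  have e3 : (P + 2 * n * b⁻¹) ^ 2 / (2 - 2 * (b⁻¹) ^ 2)
      = (P * b + 2 * n) ^ 2 / (2 * b ^ 2 - 2) := by
    rw [div_eq_div_iff hd2 hd1']
    field_simp
  have e4 : (b + b⁻¹) ^ 2 = (b ^ 2 + 1) ^ 2 / b ^ 2 := by
    field_simp
  rw [h1, h2, hs1, hs2, e1, e2, e3, e4]
  have hb2ne : (b : ℂ) ^ 2 ≠ 0 := pow_ne_zero 2 hb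
  field_simp [hd1, hd1', hb2ne]
  have h4 : (4 : ℂ) ≠ 0 := by norm_num
  have hD : ((2:ℂ) - 2 * b ^ 2) * (4 * b ^ 2) * 4 * (2 - 2 * b ^ 2) ≠ 0 :=
    mul_ne_zero (mul_ne_zero (mul_ne_zero hd1 (mul_ne_zero h4 hb2ne)) h4) hd1
  ring
end

section
/- Additivity of conformal weights of the split vertex operator: with α^(1) = α/√(2-2b^2), α^(2) = α/√(2-2b^{-2}), Q = b+b^{-1}, Q^(1) = b^(1)+(b^(1))^{-1}, Q^(2) = b^(2)+(b^(2))^{-1}, where (b^(1))^2 = 2b^2/(1-b^2) and (b^(2))^{-2} = 2b^{-2}/(1-b^{-2}), one has Δ(α^(1)-Q^(1)/2, b^(1)) + Δ(α^(2)-Q^(2)/2, b^(2)) = (1/2)·α(Q-α), where Δ(P,β) = (β+β^{-1})^2/4 - P^2. -/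
set_option maxHeartbeats 1000000


/-- **Additivity of conformal weights of the split vertex operator.** With
`α⁽¹⁾ = α/√(2-2b²)`, `α⁽²⁾ = α/√(2-2b⁻²)`, `Q = b+b⁻¹`, `Q⁽¹⁾ = b⁽¹⁾+(b⁽¹⁾)⁻¹`,
`Q⁽²⁾ = b⁽²⁾+(b⁽²⁾)⁻¹`, where the square roots `s₁, s₂` are chosen consistently so that
`b⁽¹⁾ = 2b/s₁` (whence `(b⁽¹⁾)² = 2b²/(1-b²)`) and `(b⁽²⁾)⁻¹ = 2b⁻¹/s₂`
(whence `(b⁽²⁾)⁻² = 2b⁻²/(1-b⁻²)`), and `Δ(P,β) = (β+β⁻¹)²/4 - P²`, one has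
`Δ(α⁽¹⁾-Q⁽¹⁾/2, b⁽¹⁾) + Δ(α⁽²⁾-Q⁽²⁾/2, b⁽²⁾) = α(Q-α)/2`. -/
theorem split_vertex_weight_additivity (b α : ℂ) (hb : b ≠ 0) (hb2 : b ^ 2 ≠ 1)
    (s1 s2 : ℂ) (hs1 : s1 ^ 2 = 2 - 2 * b ^ 2) (hs2 : s2 ^ 2 = 2 - 2 * (b⁻¹) ^ 2)
    (hs1' : s1 ≠ 0) (hs2' : s2 ≠ 0)
    (Δ : ℂ → ℂ → ℂ) (hΔ : ∀ p β : ℂ, Δ p β = (β + β⁻¹) ^ 2 / 4 - p ^ 2) :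
    Δ (α / s1 - (2 * b / s1 + (2 * b / s1)⁻¹) / 2) (2 * b / s1) +
      Δ (α / s2 - ((2 * b⁻¹ / s2)⁻¹ + 2 * b⁻¹ / s2) / 2) ((2 * b⁻¹ / s2)⁻¹) =
    α * ((b + b⁻¹) - α) / 2 := by
  have hb2' : (1:ℂ) - b ^ 2 ≠ 0 := fun h => hb2 (by linear_combination -h)
  have hb2'' : b ^ 2 - 1 ≠ 0 := fun h => hb2 (by linear_combination h)
  have e1 : (2 * b / s1)⁻¹ = s1 / (2 * b) := inv_div ..
  have e2 : (2 * b⁻¹ / s2)⁻¹ = b * s2 / 2 := by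
    rw [inv_div]; field_simp
  have e3 : 2 * b⁻¹ / s2 = (b * s2 / 2)⁻¹ := by rw [← e2, inv_inv]
  rw [hΔ, hΔ, e1, e2, e3]
  have key : ∀ s B : ℂ, s ≠ 0 → (B ^ 2 / 4 - (α / s - B / 2) ^ 2) = α * B / s - α ^ 2 / s ^ 2 := by
    intro s B hs; field_simp; ring
  have hB1 : 2 * b / s1 + s1 / (2 * b) = (b ^ 2 + 1) / (b * s1) := by
    field_simp; linear_combination hs1
  have hs2b : b ^ 2 * s2 ^ 2 = 2 * b ^ 2 - 2 := by
    have := hs2; field_simp at this; linear_combination this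
  have hB2 : b * s2 / 2 + (b * s2 / 2)⁻¹ = (b ^ 2 + 1) / (b * s2) := by
    have hbs2 : b * s2 ≠ 0 := mul_ne_zero hb hs2'
    field_simp; linear_combination hs2b
  rw [key s1 _ hs1', key s2 _ hs2', hB1, hB2]
  field_simp
  linear_combination (-(α * (b ^ 2 + 1 - α * b)) * (s2 ^ 2 - 2)) * hs1 + (2 * (α * (b ^ 2 + 1 - α * b))) * hs2b
end

section
/- Triple product determinant identity for traceless 2×2 matrices: for A, B, C ∈ sl(2,ℂ), (tr([A,B]C))^2 = -2·det of the 3×3 Gram matrix with entries tr(A^2), tr(AB), tr(AC); tr(BA), tr(B^2), tr(BC); tr(CA), tr(CB), tr(C^2). -/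
open Matrix

/-- **Triple product determinant identity for traceless 2×2 matrices.** For
`A, B, C ∈ 𝔰𝔩(2,ℂ)` one has `(tr([A,B]C))² = -2·det M` where `M` is the 3×3 Gram
matrix of pairwise traces of products. -/
theorem sl2_triple_product_det (A B C : Matrix (Fin 2) (Fin 2) ℂ)
    (hA : A.trace = 0) (hB : B.trace = 0) (hC : C.trace = 0) :
    ((A * B - B * A) * C).trace ^ 2 =
      -2 * Matrix.det !![(A * A).trace, (A * B).trace, (A * C).trace;
                         (B * A).trace, (B * B).trace, (B * C).trace;
                         (C * A).trace, (C * B).trace, (C * C).trace] := by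
  simp only [Matrix.trace, Matrix.diag, Fin.sum_univ_two, Matrix.mul_apply,
    Matrix.sub_apply, Matrix.det_fin_three, Matrix.of_apply, Matrix.cons_val',
    Matrix.cons_val_zero, Matrix.cons_val_one, Matrix.head_cons,
    Matrix.empty_val', Matrix.cons_val_fin_one, Matrix.head_fin_const,
    Matrix.cons_val_two, Matrix.tail_cons] at *
  have hA' : A 1 1 = -A 0 0 := by linear_combination hA
  have hB' : B 1 1 = -B 0 0 := by linear_combination hB
  have hC' : C 1 1 = -C 0 0 := by linear_combination hC
  rw [hA', hB', hC']; ring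
end

section
/- Barnes G-function coefficient ratio: with C(σ) = 1/(G(1-2σ)G(1+2σ)) where G is the Barnes G-function, for every positive integer n one has C(σ+n)C(σ-n)/C(σ)^2 = 1/( ∏_{k=1}^{2n-1} (k^2-4σ^2)^{2(2n-k)} · (4σ^2)^{2n} ). -/
private lemma gamma_ne_aux {a : ℂ} (ha : ∀ m : ℤ, a ≠ (m : ℂ)) {s : ℂ} (c : ℤ)
    (hs : s = a + c ∨ s = -a + c) : Complex.Gamma s ≠ 0 := by
  apply Complex.Gamma_ne_zero
  intro m hm
  rcases hs with h | h
  · exact ha (-(m : ℤ) - c) (by push_cast; linear_combination hm - h)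
  · exact ha ((m : ℤ) + c) (by push_cast; linear_combination h - hm)

private lemma G_ne_aux {a : ℂ} (ha : ∀ m : ℤ, a ≠ (m : ℂ)) (G : ℂ → ℂ)
    (hGne : ∀ z : ℂ, (∀ m : ℤ, z ≠ (m : ℂ)) → G z ≠ 0) {s : ℂ} (c : ℤ)
    (hs : s = a + c ∨ s = -a + c) : G s ≠ 0 := by
  apply hGne
  intro m hm
  rcases hs with h | h
  · exact ha ((m : ℤ) - c) (by push_cast; linear_combination hm - h)
  · exact ha (c - (m : ℤ)) (by push_cast; linear_combination h - hm)

private lemma gammaK {a : ℂ} (ha : ∀ m : ℤ, a ≠ (m : ℂ)) : ∀ m : ℕ,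
    Complex.Gamma (a + m + 1) * Complex.Gamma ((m : ℂ) + 1 - a) =
      Complex.Gamma (a - m) * Complex.Gamma (-a - m) * (-(a ^ 2)) *
        ∏ i ∈ Finset.Icc 1 m, ((i : ℂ) ^ 2 - a ^ 2) ^ 2 := by
  have ha0 : a ≠ 0 := by simpa using ha 0
  intro m
  induction m with
  | zero =>
      have h1 : Complex.Gamma (a + 1) = a * Complex.Gamma a :=
        Complex.Gamma_add_one a ha0
      have h2 : Complex.Gamma (-a + 1) = -a * Complex.Gamma (-a) :=
        Complex.Gamma_add_one (-a) (neg_ne_zero.mpr ha0)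
      have e1 : (a + (0 : ℕ) + 1 : ℂ) = a + 1 := by push_cast; ring
      have e2 : (((0 : ℕ) : ℂ) + 1 - a) = -a + 1 := by push_cast; ring
      have e3 : (a - (0 : ℕ) : ℂ) = a := by push_cast; ring
      have e4 : (-a - (0 : ℕ) : ℂ) = -a := by push_cast; ring
      rw [e1, e2, e3, e4, h1, h2]
      simp
      ring
  | succ m ih =>
      have hz1 : (a + (m : ℂ) + 1) ≠ 0 := fun h =>
        ha (-(m : ℤ) - 1) (by push_cast; linear_combination h)
      have hz2 : ((m : ℂ) + 1 - a) ≠ 0 := fun h =>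
        ha ((m : ℤ) + 1) (by push_cast; linear_combination -h)
      have hz3 : (a - (m : ℂ) - 1) ≠ 0 := fun h =>
        ha ((m : ℤ) + 1) (by push_cast; linear_combination h)
      have hz4 : (-a - (m : ℂ) - 1) ≠ 0 := fun h =>
        ha (-(m : ℤ) - 1) (by push_cast; linear_combination -h)
      have e1 : Complex.Gamma (a + ((m : ℕ) + 1 : ℕ) + 1)
          = (a + m + 1) * Complex.Gamma (a + m + 1) := by
        have harg : (a + (((m : ℕ) + 1 : ℕ) : ℂ) + 1) = (a + m + 1) + 1 := by push_cast; ring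
        rw [harg]; exact Complex.Gamma_add_one _ hz1
      have e2 : Complex.Gamma ((((m : ℕ) + 1 : ℕ) : ℂ) + 1 - a)
          = ((m : ℂ) + 1 - a) * Complex.Gamma ((m : ℂ) + 1 - a) := by
        have harg : ((((m : ℕ) + 1 : ℕ) : ℂ) + 1 - a) = ((m : ℂ) + 1 - a) + 1 := by
          push_cast; ring
        rw [harg]; exact Complex.Gamma_add_one _ hz2
      have e3 : Complex.Gamma (a - (m : ℂ))
          = (a - m - 1) * Complex.Gamma (a - (((m : ℕ) + 1 : ℕ) : ℂ)) := by
        have h := Complex.Gamma_add_one (a - (m : ℂ) - 1) hz3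
        have harg : (a - (m : ℂ) - 1) + 1 = a - (m : ℂ) := by ring
        have harg2 : (a - (((m : ℕ) + 1 : ℕ) : ℂ)) = a - (m : ℂ) - 1 := by push_cast; ring
        rw [harg] at h
        rw [harg2, h]
      have e4 : Complex.Gamma (-a - (m : ℂ))
          = (-a - m - 1) * Complex.Gamma (-a - (((m : ℕ) + 1 : ℕ) : ℂ)) := by
        have h := Complex.Gamma_add_one (-a - (m : ℂ) - 1) hz4
        have harg : (-a - (m : ℂ) - 1) + 1 = -a - (m : ℂ) := by ring
        have harg2 : (-a - (((m : ℕ) + 1 : ℕ) : ℂ)) = -a - (m : ℂ) - 1 := by push_cast; ring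
        rw [harg] at h
        rw [harg2, h]
      rw [e1, e2, Finset.prod_Icc_succ_top (Nat.le_add_left 1 m)]
      rw [e3, e4] at ih
      push_cast at ih ⊢
      linear_combination (a + (m : ℂ) + 1) * ((m : ℂ) + 1 - a) * ih

private lemma prodsplit (X : ℕ → ℂ) (m : ℕ) :
    ∏ k ∈ Finset.Icc 1 m, X k ^ (2 * (m + 1 - k)) =
      (∏ k ∈ Finset.Icc 1 (m - 1), X k ^ (2 * (m - k))) * ∏ k ∈ Finset.Icc 1 m, X k ^ 2 := by
  cases m with
  | zero => simp
  | succ m =>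
      have h1 : ∀ k ∈ Finset.Icc 1 (m + 1),
          X k ^ (2 * (m + 1 + 1 - k)) = X k ^ (2 * (m + 1 - k)) * X k ^ 2 := by
        intro k hk
        rw [← pow_add]
        congr 1
        have := (Finset.mem_Icc.mp hk).2
        omega
      rw [Finset.prod_congr rfl h1, Finset.prod_mul_distrib]
      congr 1
      rw [Nat.add_sub_cancel, Finset.prod_Icc_succ_top (Nat.le_add_left 1 m)]
      simp

private lemma barnesL (G : ℂ → ℂ) (hG : ∀ z : ℂ, G (z + 1) = Complex.Gamma z * G z)
    {a : ℂ} (ha : ∀ m : ℤ, a ≠ (m : ℂ)) : ∀ m : ℕ,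
    G (1 - a - m) * G (1 + a + m) * G (1 - a + m) * G (1 + a - m) =
      (G (1 - a) * G (1 + a)) ^ 2 *
        ((-(a ^ 2)) ^ m *
          ∏ k ∈ Finset.Icc 1 (m - 1), ((k : ℂ) ^ 2 - a ^ 2) ^ (2 * (m - k))) := by
  intro m
  induction m with
  | zero => simp; ring
  | succ m ih =>
      have hz1 : Complex.Gamma (-a - (m : ℂ)) ≠ 0 :=
        gamma_ne_aux ha (-(m : ℤ)) (Or.inr (by push_cast; ring))
      have hz2 : Complex.Gamma (a - (m : ℂ)) ≠ 0 :=
        gamma_ne_aux ha (-(m : ℤ)) (Or.inl (by push_cast; ring))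
      have r1 : G (1 - a - ((m : ℂ) + 1)) * Complex.Gamma (-a - (m : ℂ)) = G (1 - a - m) := by
        have h := hG (-a - (m : ℂ))
        have c1 : G (-a - (m : ℂ) + 1) = G (1 - a - m) := congrArg G (by ring)
        have c2 : G (1 - a - ((m : ℂ) + 1)) = G (-a - (m : ℂ)) := congrArg G (by ring)
        rw [c1] at h
        rw [c2, h]; ring
      have r2 : G (1 + a - ((m : ℂ) + 1)) * Complex.Gamma (a - (m : ℂ)) = G (1 + a - m) := by
        have h := hG (a - (m : ℂ))
        have c1 : G (a - (m : ℂ) + 1) = G (1 + a - m) := congrArg G (by ring)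
        have c2 : G (1 + a - ((m : ℂ) + 1)) = G (a - (m : ℂ)) := congrArg G (by ring)
        rw [c1] at h
        rw [c2, h]; ring
      have r3 : G (1 + a + ((m : ℂ) + 1))
          = Complex.Gamma (a + (m : ℂ) + 1) * G (1 + a + m) := by
        have h := hG (a + (m : ℂ) + 1)
        have c1 : G (1 + a + ((m : ℂ) + 1)) = G (a + (m : ℂ) + 1 + 1) := congrArg G (by ring)
        have c2 : G (a + (m : ℂ) + 1) = G (1 + a + m) := congrArg G (by ring)
        rw [c1, h, c2]
      have r4 : G (1 - a + ((m : ℂ) + 1))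
          = Complex.Gamma ((m : ℂ) + 1 - a) * G (1 - a + m) := by
        have h := hG ((m : ℂ) + 1 - a)
        have c1 : G (1 - a + ((m : ℂ) + 1)) = G ((m : ℂ) + 1 - a + 1) := congrArg G (by ring)
        have c2 : G ((m : ℂ) + 1 - a) = G (1 - a + m) := congrArg G (by ring)
        rw [c1, h, c2]
      have hK := gammaK ha m
      have hsplit := prodsplit (fun k : ℕ => ((k : ℂ) ^ 2 - a ^ 2)) m
      simp only [Nat.add_sub_cancel]
      push_cast
      apply mul_right_cancel₀ (mul_ne_zero hz1 hz2)
      calc (G (1 - a - ((m : ℂ) + 1)) * G (1 + a + ((m : ℂ) + 1)) * G (1 - a + ((m : ℂ) + 1))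
              * G (1 + a - ((m : ℂ) + 1)))
            * (Complex.Gamma (-a - (m : ℂ)) * Complex.Gamma (a - (m : ℂ)))
          = (G (1 - a - ((m : ℂ) + 1)) * Complex.Gamma (-a - (m : ℂ)))
              * (G (1 + a - ((m : ℂ) + 1)) * Complex.Gamma (a - (m : ℂ)))
              * G (1 + a + ((m : ℂ) + 1)) * G (1 - a + ((m : ℂ) + 1)) := by ring
        _ = G (1 - a - m) * G (1 + a - m)
              * (Complex.Gamma (a + (m : ℂ) + 1) * G (1 + a + m))
              * (Complex.Gamma ((m : ℂ) + 1 - a) * G (1 - a + m)) := by rw [r1, r2, r3, r4]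
        _ = (G (1 - a - m) * G (1 + a + m) * G (1 - a + m) * G (1 + a - m))
              * (Complex.Gamma (a + (m : ℂ) + 1) * Complex.Gamma ((m : ℂ) + 1 - a)) := by ring
        _ = ((G (1 - a) * G (1 + a)) ^ 2 *
              ((-(a ^ 2)) ^ m * ∏ k ∈ Finset.Icc 1 (m - 1), ((k : ℂ) ^ 2 - a ^ 2) ^ (2 * (m - k))))
              * (Complex.Gamma (a - m) * Complex.Gamma (-a - m) * (-(a ^ 2)) *
                ∏ i ∈ Finset.Icc 1 m, ((i : ℂ) ^ 2 - a ^ 2) ^ 2) := by rw [ih, hK]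
        _ = ((G (1 - a) * G (1 + a)) ^ 2 *
              ((-(a ^ 2)) ^ (m + 1) *
                ((∏ k ∈ Finset.Icc 1 (m - 1), ((k : ℂ) ^ 2 - a ^ 2) ^ (2 * (m - k))) *
                  ∏ k ∈ Finset.Icc 1 m, ((k : ℂ) ^ 2 - a ^ 2) ^ 2)))
              * (Complex.Gamma (-a - (m : ℂ)) * Complex.Gamma (a - (m : ℂ))) := by ring
        _ = ((G (1 - a) * G (1 + a)) ^ 2 *
              ((-(a ^ 2)) ^ (m + 1) *
                ∏ k ∈ Finset.Icc 1 m, ((k : ℂ) ^ 2 - a ^ 2) ^ (2 * (m + 1 - k))))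
              * (Complex.Gamma (-a - (m : ℂ)) * Complex.Gamma (a - (m : ℂ))) := by rw [hsplit]

/-- **Barnes G-function coefficient ratio.** With `C(σ) = 1/(G(1-2σ)G(1+2σ))`, where `G`
is the Barnes G-function (characterized here by the recurrence `G(z+1) = Γ(z)G(z)` and
nonvanishing away from the integers), for every positive integer `n` and every `σ` with
`2σ ∉ ℤ` one has
`C(σ+n)C(σ-n)/C(σ)² = 1/(∏_{k=1}^{2n-1} (k²-4σ²)^{2(2n-k)} · (4σ²)^{2n})`. -/
theorem barnesG_coefficient_ratio (G : ℂ → ℂ)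
    (hG : ∀ z : ℂ, G (z + 1) = Complex.Gamma z * G z)
    (hGne : ∀ z : ℂ, (∀ m : ℤ, z ≠ (m : ℂ)) → G z ≠ 0)
    (σ : ℂ) (hσ : ∀ m : ℤ, 2 * σ ≠ (m : ℂ))
    (C : ℂ → ℂ) (hC : ∀ s : ℂ, C s = 1 / (G (1 - 2 * s) * G (1 + 2 * s)))
    (n : ℕ) (hn : 0 < n) :
    C (σ + n) * C (σ - n) / C σ ^ 2 =
      1 / ((∏ k ∈ Finset.Icc 1 (2 * n - 1),
          ((k : ℂ) ^ 2 - 4 * σ ^ 2) ^ (2 * (2 * n - k))) * (4 * σ ^ 2) ^ (2 * n)) := by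
  have hL := barnesL G hG hσ (2 * n)
  have hbr : (-((2 * σ) ^ 2)) ^ (2 * n) *
        ∏ k ∈ Finset.Icc 1 (2 * n - 1), ((k : ℂ) ^ 2 - (2 * σ) ^ 2) ^ (2 * (2 * n - k))
      = (∏ k ∈ Finset.Icc 1 (2 * n - 1),
          ((k : ℂ) ^ 2 - 4 * σ ^ 2) ^ (2 * (2 * n - k))) * (4 * σ ^ 2) ^ (2 * n) := by
    rw [Even.neg_pow (even_two_mul n), (by ring : ((2 * σ) ^ 2 : ℂ) = 4 * σ ^ 2), mul_comm]
  rw [hbr] at hL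
  rw [hC, hC, hC]
  have c1 : G (1 - 2 * (σ + n)) = G (1 - 2 * σ - ((2 * n : ℕ) : ℂ)) :=
    congrArg G (by push_cast; ring)
  have c2 : G (1 + 2 * (σ + n)) = G (1 + 2 * σ + ((2 * n : ℕ) : ℂ)) :=
    congrArg G (by push_cast; ring)
  have c3 : G (1 - 2 * (σ - n)) = G (1 - 2 * σ + ((2 * n : ℕ) : ℂ)) :=
    congrArg G (by push_cast; ring)
  have c4 : G (1 + 2 * (σ - n)) = G (1 + 2 * σ - ((2 * n : ℕ) : ℂ)) :=
    congrArg G (by push_cast; ring)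
  rw [c1, c2, c3, c4]
  have g1 : G (1 - 2 * σ - ((2 * n : ℕ) : ℂ)) ≠ 0 :=
    G_ne_aux hσ G hGne (1 - 2 * (n : ℤ)) (Or.inr (by push_cast; ring))
  have g2 : G (1 + 2 * σ + ((2 * n : ℕ) : ℂ)) ≠ 0 :=
    G_ne_aux hσ G hGne (1 + 2 * (n : ℤ)) (Or.inl (by push_cast; ring))
  have g3 : G (1 - 2 * σ + ((2 * n : ℕ) : ℂ)) ≠ 0 :=
    G_ne_aux hσ G hGne (1 + 2 * (n : ℤ)) (Or.inr (by push_cast; ring))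
  have g4 : G (1 + 2 * σ - ((2 * n : ℕ) : ℂ)) ≠ 0 :=
    G_ne_aux hσ G hGne (1 - 2 * (n : ℤ)) (Or.inl (by push_cast; ring))
  have g5 : G (1 - 2 * σ) ≠ 0 :=
    G_ne_aux hσ G hGne 1 (Or.inr (by push_cast; ring))
  have g6 : G (1 + 2 * σ) ≠ 0 :=
    G_ne_aux hσ G hGne 1 (Or.inl (by push_cast; ring))
  have hσ0 : σ ≠ 0 := by
    intro h
    exact hσ 0 (by simp [h])
  have h4 : (4 * σ ^ 2 : ℂ) ≠ 0 := mul_ne_zero (by norm_num) (pow_ne_zero 2 hσ0)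
  have h4p : ((4 * σ ^ 2 : ℂ)) ^ (2 * n) ≠ 0 := pow_ne_zero _ h4
  have hprod : (∏ k ∈ Finset.Icc 1 (2 * n - 1),
      ((k : ℂ) ^ 2 - 4 * σ ^ 2) ^ (2 * (2 * n - k))) ≠ 0 := by
    apply Finset.prod_ne_zero_iff.mpr
    intro k _
    apply pow_ne_zero
    intro h
    have h2 : (2 * σ - k) * (2 * σ + k) = 0 := by linear_combination -h
    rcases mul_eq_zero.mp h2 with h' | h'
    · exact hσ (k : ℤ) (by push_cast; linear_combination h')
    · exact hσ (-(k : ℤ)) (by push_cast; linear_combination h')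
  push_cast at hL g1 g2 g3 g4 ⊢
  generalize (∏ k ∈ Finset.Icc 1 (2 * n - 1),
      ((k : ℂ) ^ 2 - 4 * σ ^ 2) ^ (2 * (2 * n - k))) = P at hL hprod ⊢
  field_simp
  linear_combination -hL
end

section
/- The normalization constants Ω_n(P) given by Ω_n^2(P) = (-1)^{2n} ∏_{i,j≥1, i+j=4n}(2P+ib+jb^{-1}) / [2^{2n}·2P·∏_{i=1}^{2n-1}(2P+2ib)·∏_{j=1}^{2n-1}(2P+2jb^{-1})] satisfy the recursion Ω_{n+1/2}^2(P)·Ω_{n-1/2}^2(P)/Ω_n^4(P) = ∏_{i,j≥0, i+j=4n-2}(2P+ib+jb^{-1}) · ∏_{i,j≥0, i+j=4n}(2P+Q+ib+jb^{-1}) / ∏_{i≥0,j≥1, i+j=4n}[(2P+ib+jb^{-1})(2P+ib^{-1}+jb)], with Q = b+b^{-1}, together with initial data Ω_0(P)=1, Ω_{1/2}^2(P) = -(Q/2+P)/(2P). -/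
open Finset

noncomputable def Aprod (P b : ℂ) (n : ℕ) : ℂ :=
  ∏ i ∈ Finset.range n, (2*P + ((i:ℂ)+1)*b + (((n:ℂ) - (i:ℂ)))*b⁻¹)

noncomputable def Bprod (P c : ℂ) (n : ℕ) : ℂ :=
  ∏ i ∈ Finset.range n, (2*P + 2*((i:ℂ)+1)*c)

lemma Aprod_ne_zero (P b : ℂ) (hgen : ∀ i j : ℕ, 2 * P + (i : ℂ) * b + (j : ℂ) * b⁻¹ ≠ 0)
    (n : ℕ) : Aprod P b n ≠ 0 := by
  rw [Aprod]
  apply Finset.prod_ne_zero_iff.2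
  intro i hi
  have hi' : i < n := Finset.mem_range.1 hi
  have := hgen (i+1) (n-i)
  rw [Nat.cast_sub hi'.le] at this
  push_cast at this ⊢
  convert this using 2 <;> ring

lemma Bprod_zero (P c : ℂ) : Bprod P c 0 = 1 := by simp [Bprod]

lemma Bprod_ne_zero (P c : ℂ) (h : ∀ i : ℕ, 2*P + 2*((i:ℂ)+1)*c ≠ 0) (n : ℕ) :
    Bprod P c n ≠ 0 := by
  rw [Bprod]
  exact Finset.prod_ne_zero_iff.2 fun i _ => h i

lemma Bprod_succ (P c : ℂ) (n : ℕ) :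
    Bprod P c (n+1) = Bprod P c n * (2*P + 2*((n:ℂ)+1)*c) := by
  rw [Bprod, Bprod, Finset.prod_range_succ]

lemma convA (P b : ℂ) (m : ℕ) (hm : 0 < m) :
    (∏ i ∈ Finset.Icc 1 (2 * m - 1), (2 * P + (i : ℂ) * b + ((2 * m - i : ℕ) : ℂ) * b⁻¹))
      = Aprod P b (2*m-1) := by
  have h2 : ((2*m-1:ℕ):ℂ) = 2*(m:ℂ) - 1 := by
    have := Nat.cast_sub (R := ℂ) (show 1 ≤ 2*m by omega)
    push_cast at this; simpa using this
  rw [← Finset.Ico_add_one_right_eq_Icc, Finset.prod_Ico_eq_prod_range, Aprod]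
  apply Finset.prod_congr (by simp)
  intro i hi
  have hi' : i < 2*m - 1 := Finset.mem_range.1 (by simpa using hi)
  have h1 : 1 + i ≤ 2*m := by omega
  rw [Nat.cast_sub h1, h2]
  push_cast
  ring

lemma convB (P c : ℂ) (n : ℕ) :
    (∏ i ∈ Finset.Icc 1 n, (2 * P + 2 * (i : ℂ) * c)) = Bprod P c n := by
  rw [← Finset.Ico_add_one_right_eq_Icc, Finset.prod_Ico_eq_prod_range, Bprod]
  apply Finset.prod_congr (by simp)
  intro i hi
  push_cast
  ring

lemma symmA (P b : ℂ) (n : ℕ) :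
    Aprod P b n = ∏ i ∈ Finset.range n, (2*P + ((i:ℂ)+1)*b⁻¹ + (((n:ℂ) - (i:ℂ)))*b) := by
  rw [Aprod, ← Finset.prod_range_reflect]
  apply Finset.prod_congr rfl
  intro i hi
  have hi' : i < n := Finset.mem_range.1 hi
  rw [Nat.cast_sub (by omega : i ≤ n - 1), Nat.cast_sub (by omega : 1 ≤ n)]
  push_cast
  ring

lemma C2 (P b : ℂ) (n : ℕ) :
    (∏ i ∈ Finset.range (n+1), (2 * P + (b + b⁻¹) + (i : ℂ) * b + ((n - i : ℕ) : ℂ) * b⁻¹))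
      = Aprod P b (n+1) := by
  rw [Aprod]
  apply Finset.prod_congr rfl
  intro i hi
  have hi' : i < n + 1 := Finset.mem_range.1 hi
  rw [Nat.cast_sub (by omega : i ≤ n)]
  push_cast
  ring

lemma C3 (P b : ℂ) (n N M : ℕ) (hN : N = n+3) (hM : M = n+2) :
    (∏ i ∈ Finset.range N, (2 * P + (i : ℂ) * b + ((M - i : ℕ) : ℂ) * b⁻¹))
      = (2*P + ((n:ℂ)+2)*b⁻¹) * Aprod P b (n+1) * (2*P + ((n:ℂ)+2)*b) := by
  subst hN hM
  simp only [Aprod]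
  rw [show n+3 = (n+1)+1+1 from rfl, Finset.prod_range_succ, Finset.prod_range_succ']
  rw [Finset.prod_congr rfl (fun i hi => by
    have hi' : i < n + 1 := Finset.mem_range.1 hi
    rw [Nat.cast_sub (by omega : i + 1 ≤ n + 2)]
    push_cast
    ring
    : ∀ x ∈ Finset.range (n+1), (2 * P + ((x+1 : ℕ) : ℂ) * b + ((n + 2 - (x+1) : ℕ) : ℂ) * b⁻¹)
        = (2*P + ((x:ℂ)+1)*b + (((n:ℂ)+1) - (x:ℂ))*b⁻¹))]
  have h1 : ((n + 2 - 0 : ℕ) : ℂ) = (n:ℂ) + 2 := by push_cast; ring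
  have h2 : ((n + 2 - (n+1+1) : ℕ) : ℂ) = 0 := by norm_num
  rw [h1, h2]
  push_cast
  ring

lemma C4 (P b : ℂ) (n N M : ℕ) (hN : N = n+1) (hM : M = n+1) :
    (∏ i ∈ Finset.range N, (2 * P + (i : ℂ) * b + ((M - i : ℕ) : ℂ) * b⁻¹))
      = (2*P + ((n:ℂ)+1)*b⁻¹) * Aprod P b n := by
  subst hN hM
  simp only [Aprod]
  rw [Finset.prod_range_succ']
  rw [Finset.prod_congr rfl (fun i hi => by
    have hi' : i < n := Finset.mem_range.1 hi
    rw [Nat.cast_sub (by omega : i + 1 ≤ n + 1)]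
    push_cast
    ring
    : ∀ x ∈ Finset.range n, (2 * P + ((x+1 : ℕ) : ℂ) * b + ((n + 1 - (x+1) : ℕ) : ℂ) * b⁻¹)
        = (2*P + ((x:ℂ)+1)*b + ((n:ℂ) - (x:ℂ))*b⁻¹))]
  have h1 : ((n + 1 - 0 : ℕ) : ℂ) = (n:ℂ) + 1 := by push_cast; ring
  rw [h1]
  push_cast
  ring

lemma C5 (P b : ℂ) (n N M : ℕ) (hN : N = n+1) (hM : M = n+1) :
    (∏ i ∈ Finset.range N, (2 * P + (i : ℂ) * b⁻¹ + ((M - i : ℕ) : ℂ) * b))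
      = Aprod P b n * (2*P + ((n:ℂ)+1)*b) := by
  subst hN hM
  rw [symmA]
  rw [Finset.prod_range_succ']
  rw [Finset.prod_congr rfl (fun i hi => by
    have hi' : i < n := Finset.mem_range.1 hi
    rw [Nat.cast_sub (by omega : i + 1 ≤ n + 1)]
    push_cast
    ring
    : ∀ x ∈ Finset.range n, (2 * P + ((x+1 : ℕ) : ℂ) * b⁻¹ + ((n + 1 - (x+1) : ℕ) : ℂ) * b)
        = (2*P + ((x:ℂ)+1)*b⁻¹ + ((n:ℂ) - (x:ℂ))*b))]
  have h1 : ((n + 1 - 0 : ℕ) : ℂ) = (n:ℂ) + 1 := by push_cast; ring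
  rw [h1]
  push_cast
  ring

private lemma key (n1 d1 n2 d2 n3 d3 x y : ℂ) (hd1 : d1 ≠ 0) (hd2 : d2 ≠ 0) (hn3 : n3 ≠ 0)
    (hd3 : d3 ≠ 0) (hy : y ≠ 0)
    (h : n1 * n2 * d3^2 * y = x * (d1 * d2 * n3^2)) :
    n1/d1 * (n2/d2) / (n3/d3)^2 = x / y := by
  field_simp
  linear_combination h

private lemma key1 (n1 d1 n3 d3 x y : ℂ) (hd1 : d1 ≠ 0) (hn3 : n3 ≠ 0)
    (hd3 : d3 ≠ 0) (hy : y ≠ 0)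
    (h : n1 * d3^2 * y = x * (d1 * n3^2)) :
    n1/d1 / (n3/d3)^2 = x / y := by
  field_simp
  linear_combination h

/-- **Recursion for the normalization constants `Ωₙ(P)`.** Index half-integers `n` by
`m = 2n ∈ ℕ` and write `Ω2 m = Ω²_{m/2}(P)`. The closed formula
`Ωₙ²(P) = (-1)^{2n} ∏_{i,j≥1, i+j=4n}(2P+ib+jb⁻¹) /
  [2^{2n}·2P·∏_{i=1}^{2n-1}(2P+2ib)·∏_{j=1}^{2n-1}(2P+2jb⁻¹)]` (for `n > 0`),
together with the initial data `Ω₀ = 1`, satisfies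
`Ω²_{1/2}(P) = -(Q/2+P)/(2P)` and, for every `n ≥ 1/2` (`m ≥ 1`), the recursion
`Ω²_{n+1/2}·Ω²_{n-1/2}/Ω⁴_n = ∏_{i,j≥0, i+j=4n-2}(2P+ib+jb⁻¹) ·
  ∏_{i,j≥0, i+j=4n}(2P+Q+ib+jb⁻¹) / ∏_{i≥0,j≥1, i+j=4n}[(2P+ib+jb⁻¹)(2P+ib⁻¹+jb)]`,
with `Q = b+b⁻¹`. -/
theorem omega_closed_formula_satisfies_recursion (b P : ℂ) (hb : b ≠ 0)
    (hgen : ∀ i j : ℕ, 2 * P + (i : ℂ) * b + (j : ℂ) * b⁻¹ ≠ 0)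
    (Ω2 : ℕ → ℂ)
    (hΩ0 : Ω2 0 = 1)
    (hΩ : ∀ m : ℕ, 0 < m → Ω2 m =
      (-1 : ℂ) ^ m *
        (∏ i ∈ Finset.Icc 1 (2 * m - 1), (2 * P + (i : ℂ) * b + ((2 * m - i : ℕ) : ℂ) * b⁻¹)) /
        (2 ^ m * (2 * P) * (∏ i ∈ Finset.Icc 1 (m - 1), (2 * P + 2 * (i : ℂ) * b)) *
          (∏ j ∈ Finset.Icc 1 (m - 1), (2 * P + 2 * (j : ℂ) * b⁻¹)))) :
    Ω2 1 = -(((b + b⁻¹) / 2 + P) / (2 * P)) ∧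
    ∀ m : ℕ, 0 < m →
      Ω2 (m + 1) * Ω2 (m - 1) / Ω2 m ^ 2 =
        ((∏ i ∈ Finset.range (2 * m - 1),
            (2 * P + (i : ℂ) * b + ((2 * m - 2 - i : ℕ) : ℂ) * b⁻¹)) *
          ∏ i ∈ Finset.range (2 * m + 1),
            (2 * P + (b + b⁻¹) + (i : ℂ) * b + ((2 * m - i : ℕ) : ℂ) * b⁻¹)) /
        ∏ i ∈ Finset.range (2 * m),
          ((2 * P + (i : ℂ) * b + ((2 * m - i : ℕ) : ℂ) * b⁻¹) *
            (2 * P + (i : ℂ) * b⁻¹ + ((2 * m - i : ℕ) : ℂ) * b)) := by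
  have h2P : 2 * P ≠ 0 := by simpa using hgen 0 0
  constructor
  · have e := hΩ 1 one_pos
    norm_num at e
    rw [e]
    field_simp
    ring
  · intro m hm
    have hneg : (-1 : ℂ) ≠ 0 := by norm_num
    have h2 : (2 : ℂ) ≠ 0 := two_ne_zero
    have hBb := Bprod_ne_zero P b (fun i hc => hgen (2*(i+1)) 0 (by push_cast; linear_combination hc))
    have hBc := Bprod_ne_zero P b⁻¹ (fun i hc => hgen 0 (2*(i+1)) (by push_cast; linear_combination hc))
    rcases Nat.lt_or_ge m 2 with hlt | hge
    · obtain rfl : m = 1 := by omega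
      have e2 := hΩ 2 (by norm_num)
      have e1 := hΩ 1 one_pos
      rw [convA P b 2 (by norm_num)] at e2
      rw [convA P b 1 one_pos] at e1
      rw [convB, convB] at e2
      rw [convB, convB] at e1
      simp only [show 2*2-1 = 3 by norm_num, show 2*1-1 = 1 by norm_num,
        show (2:ℕ)-1 = 1 from rfl, show (1:ℕ)-1 = 0 from rfl, Bprod_zero] at e1 e2
      rw [C2 P b (2*1)]
      rw [Finset.prod_mul_distrib,
        C4 P b 1 (2*1) (2*1) (by norm_num) (by norm_num),
        C5 P b 1 (2*1) (2*1) (by norm_num) (by norm_num)]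
      simp only [show 2*1+1 = 3 by norm_num, show 2*1-1 = 1 by norm_num,
        show (1:ℕ)+1 = 2 from rfl, show (1:ℕ)-1 = 0 from rfl]
      rw [Finset.prod_range_one]
      rw [e2, hΩ0, e1, mul_one]
      have hB1 : ∀ c : ℂ, Bprod P c 1 = 2*P + 2*c := by
        intro c
        have h := Bprod_succ P c 0
        rw [Bprod_zero] at h
        norm_num at h
        rw [h]
      rw [hB1 b, hB1 b⁻¹]
      have hA1 := Aprod_ne_zero P b hgen 1
      have hA3 := Aprod_ne_zero P b hgen 3
      have hf1 : 2*P + 2*b ≠ 0 := fun hc => hgen 2 0 (by push_cast; linear_combination hc)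
      have hg1 : 2*P + 2*b⁻¹ ≠ 0 := fun hc => hgen 0 2 (by push_cast; linear_combination hc)
      have hf4 : 2*P + (((1:ℕ):ℂ)+1)*b ≠ 0 := fun hc => hgen 2 0 (by push_cast; linear_combination hc)
      have hg4 : 2*P + (((1:ℕ):ℂ)+1)*b⁻¹ ≠ 0 := fun hc => hgen 0 2 (by push_cast; linear_combination hc)
      refine key1 _ _ _ _ _ _ ?_ ?_ ?_ ?_ ?_
      · repeat' first
          | assumption
          | exact h2P
          | exact pow_ne_zero _ h2
          | exact pow_ne_zero _ hneg
          | exact one_ne_zero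
          | apply mul_ne_zero
      · repeat' first
          | assumption
          | exact h2P
          | exact pow_ne_zero _ h2
          | exact pow_ne_zero _ hneg
          | exact one_ne_zero
          | apply mul_ne_zero
      · repeat' first
          | assumption
          | exact h2P
          | exact pow_ne_zero _ h2
          | exact pow_ne_zero _ hneg
          | exact one_ne_zero
          | apply mul_ne_zero
      · repeat' first
          | assumption
          | exact h2P
          | exact pow_ne_zero _ h2
          | exact pow_ne_zero _ hneg
          | exact one_ne_zero
          | apply mul_ne_zero
      · push_cast
        norm_num
        ring
    · obtain ⟨k, rfl⟩ : ∃ k, m = k + 2 := ⟨m - 2, by omega⟩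
      have e1 := hΩ (k+2+1) (by omega)
      have e2 := hΩ (k+2-1) (by omega)
      have e3 := hΩ (k+2) (by omega)
      rw [convA P b (k+2+1) (by omega)] at e1
      rw [convA P b (k+2-1) (by omega)] at e2
      rw [convA P b (k+2) (by omega)] at e3
      rw [convB, convB] at e1
      rw [convB, convB] at e2
      rw [convB, convB] at e3
      simp only [show 2*(k+2+1)-1 = 2*k+5 by omega, show k+2+1-1 = k+2 by omega,
        show k+2+1 = k+3 by omega] at e1
      simp only [show 2*(k+2-1)-1 = 2*k+1 by omega, show k+2-1 = k+1 by omega,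
        show 2*(k+1)-1 = 2*k+1 by omega, show k+1-1 = k by omega] at e2
      simp only [show 2*(k+2)-1 = 2*k+3 by omega, show k+2-1 = k+1 by omega,
        show k+1-1 = k by omega] at e3
      rw [C2 P b (2*(k+2))]
      rw [Finset.prod_mul_distrib,
        C3 P b (2*k) (2*(k+2)-1) (2*(k+2)-2) (by omega) (by omega),
        C4 P b (2*k+3) (2*(k+2)) (2*(k+2)) (by omega) (by omega),
        C5 P b (2*k+3) (2*(k+2)) (2*(k+2)) (by omega) (by omega)]
      simp only [show 2*(k+2)+1 = 2*k+5 by omega, show k+2-1 = k+1 by omega,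
        show k+2+1 = k+3 by omega]
      have hb2 : ∀ c : ℂ, Bprod P c (k+2) = Bprod P c k * (2*P+2*((k:ℂ)+1)*c) * (2*P+2*((k:ℂ)+2)*c) := by
        intro c
        have h1 := Bprod_succ P c (k+1)
        have h0 := Bprod_succ P c k
        rw [show k+1+1 = k+2 by omega] at h1
        rw [h0] at h1
        rw [h1]; push_cast; ring
      have hb1 : ∀ c : ℂ, Bprod P c (k+1) = Bprod P c k * (2*P+2*((k:ℂ)+1)*c) := by
        intro c; rw [Bprod_succ]
      rw [hb2 b, hb2 b⁻¹] at e1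
      rw [hb1 b, hb1 b⁻¹] at e3
      have hA1 := Aprod_ne_zero P b hgen (2*k+1)
      have hA3 := Aprod_ne_zero P b hgen (2*k+3)
      have hA5 := Aprod_ne_zero P b hgen (2*k+5)
      have hf1 : 2*P+2*((k:ℂ)+1)*b ≠ 0 := fun hc => hgen (2*(k+1)) 0 (by push_cast; linear_combination hc)
      have hf2 : 2*P+2*((k:ℂ)+2)*b ≠ 0 := fun hc => hgen (2*(k+2)) 0 (by push_cast; linear_combination hc)
      have hg1 : 2*P+2*((k:ℂ)+1)*b⁻¹ ≠ 0 := fun hc => hgen 0 (2*(k+1)) (by push_cast; linear_combination hc)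
      have hg2 : 2*P+2*((k:ℂ)+2)*b⁻¹ ≠ 0 := fun hc => hgen 0 (2*(k+2)) (by push_cast; linear_combination hc)
      have hf4 : 2*P+(((2*k+3:ℕ):ℂ)+1)*b ≠ 0 := fun hc => hgen (2*k+4) 0 (by push_cast at hc ⊢; linear_combination hc)
      have hg4 : 2*P+(((2*k+3:ℕ):ℂ)+1)*b⁻¹ ≠ 0 := fun hc => hgen 0 (2*k+4) (by push_cast at hc ⊢; linear_combination hc)
      have hBbk := hBb k
      have hBck := hBc k
      rw [e1, e2, e3]
      refine key _ _ _ _ _ _ _ _ ?_ ?_ ?_ ?_ ?_ ?_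
      · repeat' first
          | assumption
          | exact h2P
          | exact pow_ne_zero _ h2
          | exact pow_ne_zero _ hneg
          | exact one_ne_zero
          | apply mul_ne_zero
      · repeat' first
          | assumption
          | exact h2P
          | exact pow_ne_zero _ h2
          | exact pow_ne_zero _ hneg
          | exact one_ne_zero
          | apply mul_ne_zero
      · repeat' first
          | assumption
          | exact h2P
          | exact pow_ne_zero _ h2
          | exact pow_ne_zero _ hneg
          | exact one_ne_zero
          | apply mul_ne_zero
      · repeat' first
          | assumption
          | exact h2P
          | exact pow_ne_zero _ h2
          | exact pow_ne_zero _ hneg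
          | exact one_ne_zero
          | apply mul_ne_zero
      · repeat' first
          | assumption
          | exact h2P
          | exact pow_ne_zero _ h2
          | exact pow_ne_zero _ hneg
          | exact one_ne_zero
          | apply mul_ne_zero
      · push_cast
        ring
end

section
/- Specialization of the blow-up factor at c=1: for b = i, P = 2iσ and every n with 2n ∈ ℤ, the quantity l_n(P,b)^2 defined by l_n(P,b)^2 = 2^{4n^2}(β^(1))^{-Δ^(1)_n}(β^(2))^{-Δ^(2)_n}/(s_even(2P,2n)·s_even(2P+Q,2n)) satisfies 4^{-Δ^{NS}}·(-1)^{2n}·l_n(2iσ,i)^2 = 1/( ∏_{k=1}^{2|n|-1}(k^2-4σ^2)^{2(2|n|-k)}·(4σ^2)^{2|n|} ), where at b=i: Q=0, β^(1)=β^(2)=1/4, Δ^(1)_n = (σ+n)^2, Δ^(2)_n = (σ-n)^2, Δ^{NS} = 2σ^2. -/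
/-- `s_even(x,n)` for `n ≥ 0`: the product over pairs of nonnegative integers `(i,j)`
with `i+j < 2n` and `i+j` even of `(x+ib+jb⁻¹)`. -/
noncomputable def sEvenPos (b x : ℂ) (k : ℕ) : ℂ :=
  ∏ i ∈ Finset.range (2 * k), ∏ j ∈ Finset.range (2 * k),
    if i + j < 2 * k ∧ Even (i + j) then x + (i : ℂ) * b + (j : ℂ) * b⁻¹ else 1

/-- `s_even(x,n)` for all `n ∈ ℤ`, defined for `n < 0` by the reflection
`s_even(x,n) = (-1)^n s_even(Q-x,-n)` with `Q = b+b⁻¹`. -/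
noncomputable def sEven (b x : ℂ) (n : ℤ) : ℂ :=
  if 0 ≤ n then sEvenPos b x n.toNat
  else (-1 : ℂ) ^ n * sEvenPos b ((b + b⁻¹) - x) (-n).toNat


lemma sEvenPos_eq (b x : ℂ) (k : ℕ) :
    sEvenPos b x k = ∏ p ∈ (Finset.range (2*k) ×ˢ Finset.range (2*k)).filter
      (fun p => p.1 + p.2 < 2*k ∧ Even (p.1 + p.2)),
      (x + (p.1 : ℂ) * b + (p.2 : ℂ) * b⁻¹) := by
  unfold sEvenPos
  rw [← Finset.prod_product', ← Finset.prod_filter]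

lemma sEvenPos_succ (b x : ℂ) (k : ℕ) :
    sEvenPos b x (k+1) = sEvenPos b x k *
      ∏ i ∈ Finset.range (2*k+1), (x + (i : ℂ) * b + ((2*k - i : ℕ) : ℂ) * b⁻¹) := by
  rw [sEvenPos_eq, sEvenPos_eq]
  have hset : (Finset.range (2*(k+1)) ×ˢ Finset.range (2*(k+1))).filter
      (fun p => p.1 + p.2 < 2*(k+1) ∧ Even (p.1 + p.2)) =
    ((Finset.range (2*k) ×ˢ Finset.range (2*k)).filter
      (fun p => p.1 + p.2 < 2*k ∧ Even (p.1 + p.2))) ∪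
    ((Finset.range (2*(k+1)) ×ˢ Finset.range (2*(k+1))).filter
      (fun p => p.1 + p.2 = 2*k)) := by
    ext ⟨i, j⟩
    simp only [Finset.mem_union, Finset.mem_filter, Finset.mem_product, Finset.mem_range,
      Nat.even_iff]
    omega
  rw [hset, Finset.prod_union]
  · congr 1
    refine Finset.prod_nbij' (fun p => p.1) (fun i => (i, 2*k - i)) ?_ ?_ ?_ ?_ ?_
    · intro p hp
      simp only [Finset.mem_filter, Finset.mem_product, Finset.mem_range] at hp
      simp only [Finset.mem_range]; omega
    · intro i hi
      simp only [Finset.mem_range] at hi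
      simp only [Finset.mem_filter, Finset.mem_product, Finset.mem_range]; omega
    · intro p hp
      simp only [Finset.mem_filter, Finset.mem_product, Finset.mem_range] at hp
      have : 2*k - p.1 = p.2 := by omega
      simp [this]
    · intro i hi; rfl
    · intro p hp
      simp only [Finset.mem_filter, Finset.mem_product, Finset.mem_range] at hp
      have : 2*k - p.1 = p.2 := by omega
      rw [this]
  · rw [Finset.disjoint_left]
    rintro ⟨i,j⟩ h1 h2
    simp only [Finset.mem_filter, Finset.mem_product, Finset.mem_range] at h1 h2
    omega

lemma prod_shift (c : ℂ) (k : ℕ) :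
    ∏ i ∈ Finset.range (2*k+1), (c + (i:ℂ) - (k:ℂ)) =
      c * ∏ i ∈ Finset.Icc 1 k, (c^2 - (i:ℂ)^2) := by
  induction k with
  | zero => simp
  | succ k ih =>
    have h1 : 2*(k+1)+1 = (2*k+2)+1 := by ring
    rw [h1, Finset.prod_range_succ, Finset.prod_range_succ']
    have h2 : ∀ i ∈ Finset.range (2*k+1),
        (c + (↑(i+1):ℂ) - (↑(k+1):ℂ)) = c + (i:ℂ) - (k:ℂ) := by
      intro i _; push_cast; ring
    rw [Finset.prod_congr rfl h2, ih, Finset.prod_Icc_succ_top (by omega)]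
    push_cast
    ring

lemma sEvenPos_I (σ : ℂ) (k : ℕ) :
    sEvenPos Complex.I (4*Complex.I*σ) k =
      (2*Complex.I)^(k^2) * (2*σ)^k * ∏ i ∈ Finset.Icc 1 k, (4*σ^2 - (i:ℂ)^2)^(k-i) := by
  induction k with
  | zero => simp [sEvenPos]
  | succ k ih =>
    rw [sEvenPos_succ, ih]
    have h2 : ∀ i ∈ Finset.range (2*k+1),
        (4*Complex.I*σ + (i:ℂ) * Complex.I + ((2*k - i : ℕ) : ℂ) * Complex.I⁻¹)
          = (2*Complex.I) * (2*σ + (i:ℂ) - (k:ℂ)) := by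
      intro i hi
      simp only [Finset.mem_range] at hi
      rw [Complex.inv_I, Nat.cast_sub (by omega)]
      push_cast
      ring
    rw [Finset.prod_congr rfl h2, Finset.prod_mul_distrib, Finset.prod_const,
        Finset.card_range, prod_shift]
    have h3 : ∀ i ∈ Finset.Icc 1 k,
        (4*σ^2 - (i:ℂ)^2)^(k+1-i) = (4*σ^2 - (i:ℂ)^2)^(k-i) * (4*σ^2 - (i:ℂ)^2) := by
      intro i hi
      simp only [Finset.mem_Icc] at hi
      rw [show k+1-i = (k-i)+1 by omega, pow_succ]
    have h4 : ∏ i ∈ Finset.Icc 1 (k+1), (4*σ^2 - (i:ℂ)^2)^(k+1-i)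
        = (∏ i ∈ Finset.Icc 1 k, (4*σ^2 - (i:ℂ)^2)^(k-i)) *
          ∏ i ∈ Finset.Icc 1 k, (4*σ^2 - (i:ℂ)^2) := by
      rw [Finset.prod_Icc_succ_top (by omega), Nat.sub_self, pow_zero, mul_one,
          Finset.prod_congr rfl h3, Finset.prod_mul_distrib]
    rw [h4]
    have h5 : (2*σ)^2 = 4*σ^2 := by ring
    rw [h5, show (k+1)^2 = k^2 + (2*k+1) by ring, pow_add, pow_succ]
    ring

lemma sEvenPos_I_sq (σ : ℂ) (k : ℕ) :
    (sEvenPos Complex.I (4*Complex.I*σ) k)^2 =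
      (-1:ℂ)^(k^2) * 4^(k^2) * (4*σ^2)^k *
        ∏ i ∈ Finset.Icc 1 k, (4*σ^2 - (i:ℂ)^2)^(2*(k-i)) := by
  rw [sEvenPos_I, mul_pow, mul_pow, ← Finset.prod_pow]
  have h1 : ((2*Complex.I)^(k^2))^2 = (-1:ℂ)^(k^2) * 4^(k^2) := by
    rw [← pow_mul, mul_comm (k^2) 2, pow_mul]
    have : (2*Complex.I)^2 = (-1) * 4 := by
      rw [mul_pow, Complex.I_sq]; ring
    rw [this, mul_pow]
  have h2 : ((2*σ)^k)^2 = (4*σ^2)^k := by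
    rw [← pow_mul, mul_comm k 2, pow_mul]
    congr 1; ring
  have h3 : ∀ i ∈ Finset.Icc 1 k,
      ((4*σ^2 - (i:ℂ)^2)^(k-i))^2 = (4*σ^2 - (i:ℂ)^2)^(2*(k-i)) := by
    intro i _; rw [← pow_mul, mul_comm (k-i) 2]
  rw [h1, h2, Finset.prod_congr rfl h3]

lemma sEven_prod (σ : ℂ) (m : ℤ) :
    sEven Complex.I (2 * (2 * Complex.I * σ)) m *
      sEven Complex.I (2 * (2 * Complex.I * σ) + (Complex.I + Complex.I⁻¹)) m =
    (-1:ℂ)^(m.natAbs^2) * 4^(m.natAbs^2) * (4*σ^2)^m.natAbs *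
      ∏ i ∈ Finset.Icc 1 m.natAbs, (4*σ^2 - (i:ℂ)^2)^(2*(m.natAbs-i)) := by
  have hQ : Complex.I + Complex.I⁻¹ = 0 := by rw [Complex.inv_I]; ring
  rw [hQ, add_zero]
  unfold sEven
  rcases le_or_gt 0 m with hm | hm
  · rw [if_pos hm]
    have hk : m.toNat = m.natAbs := by omega
    have harg : 2 * (2 * Complex.I * σ) = 4*Complex.I*σ := by ring
    rw [hk, harg, ← sq, sEvenPos_I_sq]
  · rw [if_neg (by omega)]
    have hk : (-m).toNat = m.natAbs := by omega
    have harg : (Complex.I + Complex.I⁻¹) - 2 * (2 * Complex.I * σ) = 4*Complex.I*(-σ) := by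
      rw [hQ]; ring
    rw [hk, harg]
    have hz : ((-1:ℂ)^m) * ((-1:ℂ)^m) = 1 := by
      rw [← zpow_add₀ (by norm_num : (-1:ℂ) ≠ 0)]
      exact Even.neg_one_zpow ⟨m, rfl⟩
    calc (-1:ℂ)^m * sEvenPos Complex.I (4*Complex.I*(-σ)) m.natAbs *
          ((-1:ℂ)^m * sEvenPos Complex.I (4*Complex.I*(-σ)) m.natAbs)
        = ((-1:ℂ)^m * (-1:ℂ)^m) * (sEvenPos Complex.I (4*Complex.I*(-σ)) m.natAbs)^2 := by
          ring
      _ = (sEvenPos Complex.I (4*Complex.I*(-σ)) m.natAbs)^2 := by rw [hz, one_mul]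
      _ = _ := by rw [sEvenPos_I_sq]; simp only [neg_sq]

lemma four_cpow (z : ℂ) : (4:ℂ)^z = (2:ℂ)^(2*z) := by
  have h4 : (4:ℂ) = ((2:ℝ):ℂ) * ((2:ℝ):ℂ) := by norm_num
  rw [h4, Complex.mul_cpow_ofReal_nonneg (by norm_num) (by norm_num),
    ← Complex.cpow_add _ _ (by norm_num : ((2:ℝ):ℂ) ≠ 0), two_mul]
  norm_num

lemma numer (σ : ℂ) (m : ℤ) :
    (4:ℂ)^(-(2*σ^2)) * ((1/4:ℂ)^(-((σ+(m:ℂ)/2)^2)) * (1/4:ℂ)^(-((σ-(m:ℂ)/2)^2)))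
      = (2:ℂ)^(m.natAbs^2) := by
  have h4arg : (4:ℂ).arg ≠ Real.pi := by
    rw [show (4:ℂ) = ((4:ℝ):ℂ) by norm_num, Complex.arg_ofReal_of_nonneg (by norm_num)]
    exact fun h => Real.pi_ne_zero h.symm
  have hinv : ∀ z : ℂ, (1/4:ℂ)^z = (4:ℂ)^(-z) := by
    intro z
    rw [one_div, Complex.inv_cpow _ _ h4arg, ← Complex.cpow_neg]
  rw [hinv, hinv, neg_neg, neg_neg,
    ← Complex.cpow_add _ _ (by norm_num : (4:ℂ) ≠ 0),
    ← Complex.cpow_add _ _ (by norm_num : (4:ℂ) ≠ 0)]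
  have hm2 : ((m:ℂ))^2 = ((m.natAbs:ℂ))^2 := by
    have hc : ((m.natAbs:ℤ):ℂ) = ((m.natAbs:ℂ)) := by rw [Int.cast_natCast]
    rcases Int.natAbs_eq m with h | h
    · nth_rewrite 1 [h]; rw [hc]
    · nth_rewrite 1 [h]; rw [Int.cast_neg, hc]; ring
  have he : -(2*σ^2) + ((σ+(m:ℂ)/2)^2 + (σ-(m:ℂ)/2)^2) = ((m.natAbs:ℂ))^2/2 := by
    rw [← hm2]; ring
  rw [he, four_cpow, show (2:ℂ) * (((m.natAbs:ℂ))^2/2) = (((m.natAbs^2 : ℕ)):ℂ) by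
    push_cast; ring, Complex.cpow_natCast]

/-- **Specialization of the blow-up factor at `c = 1`.** For `b = i`, `P = 2iσ` and every
half-integer `n` (written `n = m/2`, `m ∈ ℤ`), the quantity
`l_n(P,b)² = 2^{4n²}(β⁽¹⁾)^{-Δ⁽¹⁾ₙ}(β⁽²⁾)^{-Δ⁽²⁾ₙ}/(s_even(2P,2n)·s_even(2P+Q,2n))`
satisfies
`4^{-Δᴺˢ}·(-1)^{2n}·l_n(2iσ,i)² = 1/(∏_{k=1}^{2|n|-1}(k²-4σ²)^{2(2|n|-k)}·(4σ²)^{2|n|})`,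
where at `b = i`: `Q = 0`, `β⁽¹⁾ = β⁽²⁾ = 1/4`, `Δ⁽¹⁾ₙ = (σ+n)²`, `Δ⁽²⁾ₙ = (σ-n)²`,
`Δᴺˢ = 2σ²` (so `2^{4n²} = 2^{m²}` and `2|n| = |m|`). -/
theorem blowup_factor_specialization_c_one (σ : ℂ) (hσ : ∀ k : ℤ, 2 * σ ≠ (k : ℂ))
    (m : ℤ) :
    (4 : ℂ) ^ (-(2 * σ ^ 2)) * (-1 : ℂ) ^ m *
      ((2 : ℂ) ^ (m.natAbs ^ 2) *
        (1 / 4 : ℂ) ^ (-((σ + (m : ℂ) / 2) ^ 2)) *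
        (1 / 4 : ℂ) ^ (-((σ - (m : ℂ) / 2) ^ 2)) /
        (sEven Complex.I (2 * (2 * Complex.I * σ)) m *
          sEven Complex.I (2 * (2 * Complex.I * σ) + (Complex.I + Complex.I⁻¹)) m)) =
      1 / ((∏ k ∈ Finset.Icc 1 (m.natAbs - 1),
          ((k : ℂ) ^ 2 - 4 * σ ^ 2) ^ (2 * (m.natAbs - k))) *
        (4 * σ ^ 2) ^ m.natAbs) := by
  set k := m.natAbs with hk
  -- facts about nonvanishing
  have hfac : ∀ i : ℕ, (4*σ^2 - (i:ℂ)^2) ≠ 0 := by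
    intro i h
    have h0 : (2*σ - (i:ℂ)) * (2*σ + (i:ℂ)) = 0 := by linear_combination h
    rcases mul_eq_zero.mp h0 with h1 | h1
    · exact hσ (i:ℤ) (by push_cast; linear_combination h1)
    · exact hσ (-(i:ℤ)) (by push_cast; linear_combination h1)
  have hσ0 : (4*σ^2 : ℂ) ≠ 0 := by
    intro h
    exact hσ 0 (by
      have : (2*σ)*(2*σ) = 0 := by linear_combination h
      rcases mul_eq_zero.mp this with h1 | h1 <;> simpa using h1)
  -- flip the product on the RHS
  have hflip : (∏ i ∈ Finset.Icc 1 (k - 1), ((i:ℂ)^2 - 4*σ^2)^(2*(k-i)))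
      = ∏ i ∈ Finset.Icc 1 k, (4*σ^2 - (i:ℂ)^2)^(2*(k-i)) := by
    have hcongr : ∀ i ∈ Finset.Icc 1 (k-1),
        ((i:ℂ)^2 - 4*σ^2)^(2*(k-i)) = (4*σ^2 - (i:ℂ)^2)^(2*(k-i)) := by
      intro i _
      rw [show (i:ℂ)^2 - 4*σ^2 = -(4*σ^2 - (i:ℂ)^2) by ring, Even.neg_pow (even_two_mul _)]
    rw [Finset.prod_congr rfl hcongr]
    rcases Nat.eq_zero_or_pos k with h0 | h0
    · rw [h0]
    · rw [show k = (k-1)+1 by omega, Finset.prod_Icc_succ_top (by omega)]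
      rw [show (k-1)+1 - ((k-1)+1) = 0 by omega, pow_zero, mul_one]
      congr 1 <;> omega
  -- sign
  have hsign : (-1:ℂ)^m = (-1:ℂ)^(k^2) := by
    rcases Int.even_or_odd m with h | h
    · have hk2 : Even (k^2) := (Nat.even_pow.mpr ⟨Int.natAbs_even.mpr h, by norm_num⟩)
      rw [Even.neg_one_zpow h, Even.neg_one_pow hk2]
    · have hk2 : Odd (k^2) := (Int.natAbs_odd.mpr h).pow
      rw [Odd.neg_one_zpow h, Odd.neg_one_pow hk2]
  rw [hflip, sEven_prod σ m, hsign]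
  -- now pure algebra
  have hN := numer σ m
  set A := (4:ℂ)^(-(2*σ^2))
  set u := (1/4:ℂ)^(-((σ+(m:ℂ)/2)^2))
  set v := (1/4:ℂ)^(-((σ-(m:ℂ)/2)^2))
  set P := ∏ i ∈ Finset.Icc 1 k, (4*σ^2 - (i:ℂ)^2)^(2*(k-i)) with hP
  have hPne : P ≠ 0 := Finset.prod_ne_zero_iff.mpr (fun i _ => pow_ne_zero _ (hfac i))
  have hsk : (4*σ^2:ℂ)^k ≠ 0 := pow_ne_zero _ hσ0
  have hneg1 : ((-1:ℂ))^(k^2) * ((-1:ℂ))^(k^2) = 1 := by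
    rw [← pow_add]; exact Even.neg_one_pow ⟨k^2, rfl⟩
  have h24 : (2:ℂ)^(k^2) * (2:ℂ)^(k^2) = (4:ℂ)^(k^2) := by
    rw [← mul_pow]; norm_num
  have h2ne : ((2:ℂ))^(k^2) ≠ 0 := pow_ne_zero _ (by norm_num)
  have hne1 : ((-1:ℂ))^(k^2) ≠ 0 := pow_ne_zero _ (by norm_num)
  have h4ne : ((4:ℂ))^(k^2) ≠ 0 := pow_ne_zero _ (by norm_num)
  have hA2 : ((-1:ℂ))^(k^2*2) = (1:ℂ) := by
    rw [pow_mul, sq, hneg1]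
  have hB2 : (2:ℂ)^(k^2*2) = (4:ℂ)^(k^2) := by
    rw [pow_mul, sq, h24]
  field_simp
  linear_combination (((-1:ℂ))^(k^2) * (4*σ^2)^k * (2:ℂ)^(k^2)) * hN +
    ((4*σ^2)^k * A * u * v * (2:ℂ)^(k^2)) * hneg1 +
    (-(A*u*v*σ^(k*2)*(2:ℂ)^(k^2)*(4:ℂ)^k))*hA2 +
    (σ^(k*2)*((-1:ℂ))^(k^2)*(4:ℂ)^k)*hB2
end
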